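/- arXiv:1901.02363 — 3 statements merged into one kernel-verified Lean document; each statement's English description precedes it below -/
import Mathlib

section
/- Let u_k* ∈ F_k (k = 1,…,K) and N = ∑_{k=1}^K u_k*. Let i, j ∈ {1,…,n} and suppose there exists a path of finite weight from i to j in the exchange graph, i.e. a sequence of indices α_0 = i, α_1, …, α_p = j in {1,…,n} and a sequence k_0, …, k_{p−1} ∈ {1,…,K} such that for each u ∈ {0,…,p−1}, u_{k_u}*(α_u) = 1, u_{k_u}*(α_{u+1}) = 0 and α_{u+1} ∉ J_{k_u}. Then N − e_i + e_j belongs to the Minkowski sum F_1 + ⋯ + F_K. -/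
open Finset

private lemma swap_step {n K : ℕ} {R : Fin K → ℕ} {J : Fin K → Set (Fin n)}
    {F : Fin K → Set (Fin n → ℝ)}
    (hF : ∀ k, F k = {u : Fin n → ℝ |
      (∀ i, u i = 0 ∨ u i = 1) ∧ (∑ i, u i) = (R k : ℝ) ∧ ∀ i ∈ J k, u i = 0})
    (ustar : Fin K → Fin n → ℝ) (hu : ∀ k, ustar k ∈ F k)
    (k0 : Fin K) (a b : Fin n)
    (ha : ustar k0 a = 1) (hb : ustar k0 b = 0) (hJb : b ∉ J k0) :
    (∀ k', Function.update ustar k0 (ustar k0 - Pi.single a 1 + Pi.single b 1) k' ∈ F k')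
    ∧ (∑ k', Function.update ustar k0 (ustar k0 - Pi.single a 1 + Pi.single b 1) k')
       = (∑ k', ustar k') - Pi.single a 1 + Pi.single b 1 := by
  have hab : a ≠ b := by intro h; rw [h, hb] at ha; norm_num at ha
  have hu0 := hu k0
  rw [hF k0] at hu0
  obtain ⟨h01, hsum, hJ0⟩ := hu0
  set w : Fin n → ℝ := ustar k0 - Pi.single a 1 + Pi.single b 1 with hw
  have hwval : ∀ β, w β = ustar k0 β - (if β = a then (1:ℝ) else 0) + (if β = b then 1 else 0) := by
    intro β
    simp [hw, Pi.single_apply]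
  constructor
  · intro k'
    by_cases hk : k' = k0
    · subst hk
      rw [Function.update_self, hF k']
      refine ⟨?_, ?_, ?_⟩
      · intro β
        rcases eq_or_ne β a with rfl | hba
        · left; rw [hwval]; simp [hab, ha]
        · rcases eq_or_ne β b with rfl | hbb
          · right; rw [hwval]; simp [Ne.symm hab, hb]
          · rw [hwval]; simp [hba, hbb]; exact h01 β
      · have : ∑ β, w β = (∑ β, ustar k' β) - (∑ β, (Pi.single a 1 : Fin n → ℝ) β)
            + ∑ β, (Pi.single b 1 : Fin n → ℝ) β := by
          simp [hw, Finset.sum_add_distrib, Finset.sum_sub_distrib]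
        rw [this, hsum]
        simp [Finset.sum_pi_single']
      · intro β hβ
        have hβa : β ≠ a := by intro h; have := hJ0 β hβ; rw [h, ha] at this; norm_num at this
        have hβb : β ≠ b := by intro h; exact hJb (h ▸ hβ)
        rw [hwval]; simp [hβa, hβb, hJ0 β hβ]
    · rw [Function.update_of_ne hk]; exact hu k'
  · rw [Finset.sum_update_of_mem (Finset.mem_univ k0)]
    have : ∑ k', ustar k' = ustar k0 + ∑ x ∈ Finset.univ \ {k0}, ustar x := by
      rw [Finset.sdiff_singleton_eq_erase, Finset.add_sum_erase _ _ (Finset.mem_univ k0)]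
    rw [this, hw]
    abel

private lemma main_lemma {n K : ℕ} {R : Fin K → ℕ} {J : Fin K → Set (Fin n)}
    {F : Fin K → Set (Fin n → ℝ)}
    (hF : ∀ k, F k = {u : Fin n → ℝ |
      (∀ i, u i = 0 ∨ u i = 1) ∧ (∑ i, u i) = (R k : ℝ) ∧ ∀ i ∈ J k, u i = 0}) :
    ∀ p : ℕ, ∀ (α : ℕ → Fin n) (k : ℕ → Fin K) (ustar : Fin K → Fin n → ℝ),
      (∀ k', ustar k' ∈ F k') →
      (∀ u < p, ustar (k u) (α u) = 1 ∧ ustar (k u) (α (u + 1)) = 0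
        ∧ α (u + 1) ∉ J (k u)) →
      ∃ v : Fin K → Fin n → ℝ, (∀ k', v k' ∈ F k') ∧
        (∑ k', v k') = (∑ k', ustar k') - Pi.single (α 0) 1 + Pi.single (α p) 1 := by
  intro p
  induction p using Nat.strong_induction_on with
  | _ p IH =>
  intro α k ustar hu hpath
  by_cases h0p : α 0 = α p
  · exact ⟨ustar, hu, by rw [h0p]; abel⟩
  by_cases hrep : ∃ s t, s < t ∧ t ≤ p ∧ α s = α t
  · -- shorten the path
    obtain ⟨s, t, hst, htp, hαst⟩ := hrep
    set d := t - s with hd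
    have hd1 : 1 ≤ d := by omega
    have hdp : d < p := by
      rcases Nat.lt_or_ge (t - s) p with h | h
      · exact h
      · exfalso
        have hs0 : s = 0 := by omega
        have htp' : t = p := by omega
        exact h0p (hs0 ▸ htp' ▸ hαst)
    set p' := p - d with hp'
    have hpp' : p' < p := by omega
    set α' : ℕ → Fin n := fun u => if u ≤ s then α u else α (u + d) with hα'
    set k' : ℕ → Fin K := fun u => if u + 1 ≤ s then k u else k (u + d) with hk'
    have hpath' : ∀ u < p', ustar (k' u) (α' u) = 1 ∧ ustar (k' u) (α' (u + 1)) = 0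
        ∧ α' (u + 1) ∉ J (k' u) := by
      intro u hup'
      rcases Nat.lt_or_ge u s with hus | hus
      · -- u + 1 ≤ s : old edge u
        have h1 : α' u = α u := by simp [hα', Nat.le_of_lt hus]
        have h2 : α' (u+1) = α (u+1) := by
          have hle : u + 1 ≤ s := hus
          simp only [hα', if_pos hle]
        have h3 : k' u = k u := by
          have hle : u + 1 ≤ s := hus
          simp only [hk', if_pos hle]
        rw [h1, h2, h3]
        exact hpath u (by omega)
      rcases Nat.eq_or_lt_of_le hus with hus' | hus'
      · -- u = s : old edge t
        have h1 : α' u = α t := by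
          have hle : u ≤ s := le_of_eq hus'.symm
          simp only [hα', if_pos hle]
          rw [← hus']; exact hαst
        have h2 : α' (u+1) = α (t+1) := by
          have : ¬ (u + 1 ≤ s) := by omega
          simp only [hα', if_neg this]
          congr 1; omega
        have h3 : k' u = k t := by
          have : ¬ (u + 1 ≤ s) := by omega
          simp only [hk', if_neg this]
          congr 1; omega
        rw [h1, h2, h3]
        exact hpath t (by omega)
      · -- u > s : old edge u + d
        have h1 : α' u = α (u + d) := by
          have hle : ¬ (u ≤ s) := by omega
          simp only [hα', if_neg hle]
        have h2 : α' (u+1) = α (u + 1 + d) := by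
          have : ¬ (u + 1 ≤ s) := by omega
          simp only [hα', if_neg this]
        have h3 : k' u = k (u + d) := by
          have : ¬ (u + 1 ≤ s) := by omega
          simp only [hk', if_neg this]
        rw [h1, h2, h3]
        have := hpath (u + d) (by omega)
        refine ⟨this.1, ?_, ?_⟩
        · have he : u + 1 + d = u + d + 1 := by omega
          rw [he]; exact this.2.1
        · have he : u + 1 + d = u + d + 1 := by omega
          rw [he]; exact this.2.2
    obtain ⟨v, hv1, hv2⟩ := IH p' hpp' α' k' ustar hu hpath'
    refine ⟨v, hv1, ?_⟩
    have e0 : α' 0 = α 0 := by simp [hα']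
    have ep : α' p' = α p := by
      rcases Nat.lt_or_ge s p' with h | h
      · have : ¬ (p' ≤ s) := by omega
        simp only [hα', if_neg this]
        congr 1; omega
      · have hps : p' = s := by omega
        have htp' : t = p := by omega
        simp only [hα', hps, if_pos (le_refl s)]
        rw [hαst, htp']
    rw [hv2, e0, ep]
  · -- all vertices distinct
    push_neg at hrep
    have hp1 : 1 ≤ p := by
      by_contra h
      exact h0p (by rw [show p = 0 by omega])
    obtain ⟨ha1, hb1, hJ1⟩ := hpath 0 hp1
    obtain ⟨hu', hsum'⟩ := swap_step hF ustar hu (k 0) (α 0) (α 1) ha1 hb1 hJ1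
    set w : Fin n → ℝ := ustar (k 0) - Pi.single (α 0) 1 + Pi.single (α 1) 1 with hw
    set ustar' : Fin K → Fin n → ℝ := Function.update ustar (k 0) w with hustar'
    rcases Nat.eq_or_lt_of_le hp1 with hp2 | hp2
    · -- p = 1
      refine ⟨ustar', hu', ?_⟩
      rw [hsum', ← hp2]
    · -- p ≥ 2
      have hwval : ∀ β, w β = ustar (k 0) β - (if β = α 0 then (1:ℝ) else 0)
          + (if β = α 1 then 1 else 0) := by
        intro β; simp [hw, Pi.single_apply]
      have hpath' : ∀ u < p - 1, ustar' (k (u+1)) (α (u+1)) = 1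
          ∧ ustar' (k (u+1)) (α (u+1+1)) = 0 ∧ α (u+1+1) ∉ J (k (u+1)) := by
        intro u hup
        obtain ⟨he1, he2, he3⟩ := hpath (u+1) (by omega)
        have hne0 : α (u+1) ≠ α 0 := (hrep 0 (u+1) (by omega) (by omega)).symm
        have hne0' : α (u+1+1) ≠ α 0 := (hrep 0 (u+1+1) (by omega) (by omega)).symm
        have hne1' : α (u+1+1) ≠ α 1 := (hrep 1 (u+1+1) (by omega) (by omega)).symm
        refine ⟨?_, ?_, he3⟩
        · by_cases hk : k (u+1) = k 0
          · rw [hustar', hk, Function.update_self]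
            rcases Nat.eq_zero_or_pos u with hu0 | hu0
            · subst hu0
              rw [hwval]
              simp [hne0, hb1]
            · have hne1 : α (u+1) ≠ α 1 := (hrep 1 (u+1) (by omega) (by omega)).symm
              rw [hwval]
              simp only [if_neg hne0, if_neg hne1]
              rw [← hk]
              simpa using he1
          · rw [hustar', Function.update_of_ne hk]
            exact he1
        · by_cases hk : k (u+1) = k 0
          · rw [hustar', hk, Function.update_self, hwval]
            simp only [if_neg hne0', if_neg hne1']
            rw [← hk]
            simpa using he2
          · rw [hustar', Function.update_of_ne hk]
            exact he2
      obtain ⟨v, hv1, hv2⟩ := IH (p-1) (by omega) (fun u => α (u+1)) (fun u => k (u+1))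
        ustar' hu' hpath'
      refine ⟨v, hv1, ?_⟩
      rw [show p - 1 + 1 = p by omega] at hv2
      rw [hv2, hsum']
      abel

/-- If there is a finite-weight path from `i` to `j` in the exchange graph
associated to a decomposition `N = ∑ₖ uₖ*` with `uₖ* ∈ Fₖ`, then
`N - eᵢ + eⱼ` belongs to the Minkowski sum `F₁ + ⋯ + F_K`. -/
theorem stmt_15 (n K : ℕ) (R : Fin K → ℕ) (hR : ∀ k, R k ≤ n)
    (J : Fin K → Set (Fin n))
    (F : Fin K → Set (Fin n → ℝ))
    (hF : ∀ k, F k = {u : Fin n → ℝ |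
      (∀ i, u i = 0 ∨ u i = 1) ∧ (∑ i, u i) = (R k : ℝ) ∧ ∀ i ∈ J k, u i = 0})
    (ustar : Fin K → Fin n → ℝ) (hu : ∀ k, ustar k ∈ F k)
    (N : Fin n → ℝ) (hN : N = ∑ k, ustar k)
    (i j : Fin n) (p : ℕ) (hp : 1 ≤ p)
    (α : ℕ → Fin n) (hα0 : α 0 = i) (hαp : α p = j)
    (k : ℕ → Fin K)
    (hpath : ∀ u < p, ustar (k u) (α u) = 1 ∧ ustar (k u) (α (u + 1)) = 0
      ∧ α (u + 1) ∉ J (k u)) :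
    ∃ v : Fin K → Fin n → ℝ, (∀ k', v k' ∈ F k')
      ∧ (∑ k', v k') = N - Pi.single i 1 + Pi.single j 1 := by
  obtain ⟨v, hv1, hv2⟩ := main_lemma hF p α k ustar hu hpath
  exact ⟨v, hv1, by rw [hv2, hα0, hαp, hN]⟩
end

section
/- Let u_k* ∈ F_k (k = 1,…,K) be an optimal decomposition of N = ∑_{k=1}^K u_k* (i.e. ∑_k ⟨ρ_k, u_k*⟩ is maximal among all decompositions of N into elements of the F_k). Define weights on ordered pairs of {1,…,n} by w_{αβ} = min{ρ_k(α) − ρ_k(β) : k such that u_k*(α) = 1, u_k*(β) = 0 and β ∉ J_k} (w_{αβ} = +∞ if no such k). Fix s ∈ {1,…,n}. For M > 0, define modified weights w' by setting w'_{st} = M for every t ≠ s with w_{st} = +∞, and w' = w otherwise. Then there exists M₀ > 0 such that for all M ≥ M₀: (a) every cycle of the graph on {1,…,n} with weights w' has nonnegative total weight; and (b) the vector y* ∈ ℝ^n defined by y*_s = 0 and, for t ≠ s, y*_t = the minimum over all finite sequences s = β_0, β_1, …, β_q = t of the total weight ∑_{u=0}^{q−1} w'_{β_u β_{u+1}} (a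 finite minimum), satisfies: for every k ∈ {1,…,K}, u_k* maximizes v ↦ ⟨ρ_k + y*, v⟩ over F_k. -/
open Finset

namespace Stmt16

lemma coe_sum {α : Type*} (s : Finset α) (f : α → ℝ) :
    ((∑ a ∈ s, f a : ℝ) : EReal) = ∑ a ∈ s, (f a : EReal) := by
  classical
  induction s using Finset.induction with
  | empty => simp
  | insert _ _ h ih => rw [Finset.sum_insert h, Finset.sum_insert h, EReal.coe_add, ih]

lemma sum_ne_bot {α : Type*} (s : Finset α) (f : α → EReal)
    (h : ∀ a ∈ s, f a ≠ ⊥) : ∑ a ∈ s, f a ≠ ⊥ := by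
  classical
  induction s using Finset.induction with
  | empty => simp
  | insert a t hx ih =>
    rw [Finset.sum_insert hx, Ne, EReal.add_eq_bot_iff]
    push_neg
    exact ⟨h a (Finset.mem_insert_self a t), ih fun b hb => h b (Finset.mem_insert_of_mem hb)⟩

lemma sum_eq_top {α : Type*} (s : Finset α) (f : α → EReal)
    (h : ∀ a ∈ s, f a ≠ ⊥) (a : α) (ha : a ∈ s) (hta : f a = ⊤) :
    ∑ b ∈ s, f b = ⊤ := by
  classical
  rw [← Finset.add_sum_erase _ _ ha, hta]
  exact EReal.top_add_of_ne_bot (sum_ne_bot _ _ fun b hb => h b (Finset.mem_of_mem_erase hb))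

noncomputable def wsum {n : ℕ} (f : Fin n → Fin n → EReal) (γ : ℕ → Fin n) (r : ℕ) : EReal :=
  ∑ u ∈ Finset.range r, f (γ u) (γ (u + 1))

lemma wsum_split {n : ℕ} (f : Fin n → Fin n → EReal) (γ : ℕ → Fin n) {i p r : ℕ}
    (hip : i < p) (hpr : p ≤ r) (h : γ i = γ p) :
    wsum f γ r = wsum f (fun m => γ (i + m)) (p - i)
      + wsum f (fun m => if m ≤ i then γ m else γ (m + (p - i))) (r - (p - i)) := by
  have e1 : wsum f (fun m => γ (i + m)) (p - i) = ∑ u ∈ Ico i p, f (γ u) (γ (u+1)) := by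
    rw [Finset.sum_Ico_eq_sum_range]
    unfold wsum
    apply Finset.sum_congr rfl
    intro u _
    simp [← Nat.add_assoc]
  have e2 : wsum f (fun m => if m ≤ i then γ m else γ (m + (p - i))) (r - (p - i))
      = (∑ u ∈ range i, f (γ u) (γ (u+1))) + ∑ u ∈ Ico p r, f (γ u) (γ (u+1)) := by
    unfold wsum
    have hd : i ≤ r - (p - i) := by omega
    simp only [Finset.range_eq_Ico]
    rw [← Finset.sum_Ico_consecutive _ (Nat.zero_le i) hd]
    congr 1
    · apply Finset.sum_congr rfl
      intro u hu
      simp only [Finset.mem_Ico] at hu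
      have h1 : u ≤ i := by omega
      have h2 : u + 1 ≤ i := by omega
      simp only [if_pos h1, if_pos h2]
    · rw [Finset.sum_Ico_eq_sum_range, Finset.sum_Ico_eq_sum_range]
      rw [show r - (p - i) - i = r - p by omega]
      apply Finset.sum_congr rfl
      intro k _
      beta_reduce
      rcases Nat.eq_zero_or_pos k with hk | hk
      · subst hk
        have h1 : i + 0 ≤ i := by omega
        have h2 : ¬ (i + 0 + 1 ≤ i) := by omega
        simp only [if_pos h1, if_neg h2]
        rw [show i + 0 + 1 + (p - i) = p + 0 + 1 by omega, show i + 0 = i by omega,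
          show p + 0 = p by omega, h]
      · have h1 : ¬ (i + k ≤ i) := by omega
        have h2 : ¬ (i + k + 1 ≤ i) := by omega
        simp only [if_neg h1, if_neg h2]
        rw [show i + k + (p - i) = p + k by omega, show i + k + 1 + (p - i) = p + k + 1 by omega]
  rw [e1, e2]
  unfold wsum
  simp only [Finset.range_eq_Ico]
  rw [← Finset.sum_Ico_consecutive (fun u => f (γ u) (γ (u+1))) (Nat.zero_le p) hpr,
    ← Finset.sum_Ico_consecutive (fun u => f (γ u) (γ (u+1))) (Nat.zero_le i) hip.le]
  abel

section
variable {n K : ℕ} (J : Fin K → Set (Fin n)) (ρ : Fin K → Fin n → ℝ)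
  (ustar : Fin K → Fin n → ℝ) (w : Fin n → Fin n → EReal)

def wset (α β : Fin n) : Set EReal := {x : EReal | ∃ k : Fin K,
      ustar k α = 1 ∧ ustar k β = 0 ∧ β ∉ J k ∧ x = ((ρ k α - ρ k β : ℝ) : EReal)}

lemma wset_finite (α β : Fin n) : (wset J ρ ustar α β).Finite := by
  apply Set.Finite.subset (Set.finite_range (fun k : Fin K => ((ρ k α - ρ k β : ℝ) : EReal)))
  rintro x ⟨k, _, _, _, rfl⟩
  exact ⟨k, rfl⟩

variable (hw : ∀ α β, w α β = sInf (wset J ρ ustar α β))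

include hw in
lemma w_le {α β : Fin n} {k : Fin K} (h1 : ustar k α = 1) (h2 : ustar k β = 0)
    (h3 : β ∉ J k) : w α β ≤ ((ρ k α - ρ k β : ℝ) : EReal) := by
  rw [hw]; exact sInf_le ⟨k, h1, h2, h3, rfl⟩

include hw in
lemma w_attained {α β : Fin n} (h : w α β ≠ ⊤) :
    ∃ k : Fin K, ustar k α = 1 ∧ ustar k β = 0 ∧ β ∉ J k ∧
      w α β = ((ρ k α - ρ k β : ℝ) : EReal) := by
  rcases Set.eq_empty_or_nonempty (wset J ρ ustar α β) with he | hne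
  · exfalso; apply h; rw [hw, he, sInf_empty]
  · have := hne.csInf_mem (wset_finite J ρ ustar α β)
    rw [← hw] at this
    obtain ⟨k, h1, h2, h3, h4⟩ := this
    exact ⟨k, h1, h2, h3, h4⟩

include hw in
lemma w_ne_bot (α β : Fin n) : w α β ≠ ⊥ := by
  by_cases h : w α β = ⊤
  · rw [h]; simp
  · obtain ⟨k, _, _, _, h4⟩ := w_attained J ρ ustar w hw h
    rw [h4]; exact EReal.coe_ne_bot _

end

lemma sum_range_shift {M : Type*} [AddCommGroup M] (g : ℕ → M) (r : ℕ) (h : g r = g 0) :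
    ∑ u ∈ range r, g (u + 1) = ∑ u ∈ range r, g u := by
  have h1 := Finset.sum_range_succ' g r
  have h2 := Finset.sum_range_succ g r
  rw [h1, h] at h2
  exact add_right_cancel h2

/-- main combinatorial lemma : no negative cycle in the exchange graph -/
lemma no_neg_cycle {n K : ℕ} (R : Fin K → ℕ) (J : Fin K → Set (Fin n))
    (ρ : Fin K → Fin n → ℝ) (F : Fin K → Set (Fin n → ℝ))
    (hF : ∀ k, F k = {u : Fin n → ℝ |
      (∀ i, u i = 0 ∨ u i = 1) ∧ (∑ i, u i) = (R k : ℝ) ∧ ∀ i ∈ J k, u i = 0})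
    (ustar : Fin K → Fin n → ℝ) (hu : ∀ k, ustar k ∈ F k)
    (hopt : ∀ v : Fin K → Fin n → ℝ, (∀ k, v k ∈ F k) →
      (∑ k, v k) = (∑ k, ustar k) →
      ∑ k, ∑ i, ρ k i * v k i ≤ ∑ k, ∑ i, ρ k i * ustar k i)
    (w : Fin n → Fin n → EReal)
    (hw : ∀ α β, w α β = sInf (wset J ρ ustar α β)) :
    ∀ r : ℕ, ∀ γ : ℕ → Fin n, 1 ≤ r → γ r = γ 0 → 0 ≤ wsum w γ r := by
  classical
  intro r
  induction r using Nat.strong_induction_on with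
  | _ r IH =>
  intro γ hr hγ
  by_contra hneg
  push_neg at hneg
  -- all the edges are real
  have hnb : ∀ u ∈ range r, w (γ u) (γ (u+1)) ≠ ⊥ := fun u _ => w_ne_bot J ρ ustar w hw _ _
  have hnt : ∀ u, u < r → w (γ u) (γ (u+1)) ≠ ⊤ := by
    intro u hur ht
    have := sum_eq_top (range r) _ hnb u (mem_range.mpr hur) ht
    rw [wsum, this] at hneg
    exact absurd hneg (by simp)
  have hwit : ∀ u : ℕ, ∃ k : Fin K, u < r →
      ustar k (γ u) = 1 ∧ ustar k (γ (u+1)) = 0 ∧ γ (u+1) ∉ J k ∧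
      w (γ u) (γ (u+1)) = ((ρ k (γ u) - ρ k (γ (u+1)) : ℝ) : EReal) := by
    intro u
    by_cases h : u < r
    · obtain ⟨k, hk⟩ := w_attained J ρ ustar w hw (hnt u h)
      exact ⟨k, fun _ => hk⟩
    · obtain ⟨k, _⟩ := w_attained J ρ ustar w hw (hnt 0 hr)
      exact ⟨k, fun hc => absurd hc h⟩
  choose kf hkf using hwit
  -- real edge weights
  set c : ℕ → ℝ := fun u => ρ (kf u) (γ u) - ρ (kf u) (γ (u+1)) with hc
  have hedge : ∀ u, u < r → w (γ u) (γ (u+1)) = ((c u : ℝ) : EReal) := fun u h => (hkf u h).2.2.2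
  have hSsum : wsum w γ r = ((∑ u ∈ range r, c u : ℝ) : EReal) := by
    rw [wsum, coe_sum]
    exact Finset.sum_congr rfl fun u hu' => hedge u (mem_range.mp hu')
  have hS : (∑ u ∈ range r, c u) < 0 := by
    rw [hSsum] at hneg
    exact_mod_cast hneg
  -- no repeated vertex among γ 0 .. γ (r-1)
  have key2 : ∀ i p, i < p → p < r → γ i ≠ γ p := by
    intro i p hip hpr heq
    have hsplit := wsum_split w γ hip hpr.le heq
    have hA := IH (p - i) (by omega) (fun m => γ (i + m)) (by omega)
      (by beta_reduce; rw [show i + (p - i) = p by omega, ← heq, Nat.add_zero])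
    have hB := IH (r - (p - i)) (by omega)
      (fun m => if m ≤ i then γ m else γ (m + (p - i))) (by omega)
      (by
        beta_reduce
        rw [if_neg (by omega : ¬ (r - (p - i) ≤ i)), if_pos (Nat.zero_le i),
          show r - (p - i) + (p - i) = r by omega, hγ])
    rw [hsplit] at hneg
    have : (0 : EReal) ≤ wsum w (fun m => γ (i + m)) (p - i)
        + wsum w (fun m => if m ≤ i then γ m else γ (m + (p - i))) (r - (p - i)) :=
      le_trans (by simp) (add_le_add hA hB)
    exact absurd hneg (not_lt.mpr this)
  -- no repeated customer among the edges
  have key3 : ∀ u u', u < u' → u' < r → kf u ≠ kf u' := by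
    intro u u' huu hur hkeq
    set k := kf u with hk
    obtain ⟨w1u, w2u, w3u, w4u⟩ := hkf u (by omega)
    obtain ⟨w1u', w2u', w3u', w4u'⟩ := hkf u' hur
    rw [← hkeq] at w1u' w2u' w3u' w4u'
    set len := u' - u with hlen
    -- the two shortcut cycles
    set δ : ℕ → Fin n := fun m => if m < len then γ (u+1+m) else γ (u+1) with hδ
    set η : ℕ → Fin n := fun m => if m ≤ u then γ m else γ (m + len) with hη
    have hδc : δ len = δ 0 := by
      simp only [hδ, if_neg (lt_irrefl len), if_pos (by omega : 0 < len), Nat.add_zero]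
    have hηc : η (r - len) = η 0 := by
      simp only [hη, if_neg (by omega : ¬ (r - len ≤ u)), if_pos (Nat.zero_le u),
        show r - len + len = r by omega, hγ]
    -- bound wsum of δ
    have hsh1 : w (γ u') (γ (u+1)) ≤ ((ρ k (γ u') - ρ k (γ (u+1)) : ℝ) : EReal) :=
      w_le J ρ ustar w hw w1u' w2u w3u
    have hsh2 : w (γ u) (γ (u'+1)) ≤ ((ρ k (γ u) - ρ k (γ (u'+1)) : ℝ) : EReal) :=
      w_le J ρ ustar w hw w1u w2u' w3u'
    set a : ℝ := (∑ m ∈ range (len - 1), c (u+1+m)) + (ρ k (γ u') - ρ k (γ (u+1))) with ha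
    set b : ℝ := (∑ m ∈ range u, c m) + (ρ k (γ u) - ρ k (γ (u'+1)))
      + (∑ m ∈ Ico (u+1) (r - len), c (m + len)) with hb
    have hAle : wsum w δ len ≤ ((a : ℝ) : EReal) := by
      rw [wsum, ha, EReal.coe_add, coe_sum, show len = (len - 1) + 1 by omega,
        Finset.sum_range_succ]
      apply add_le_add
      · apply le_of_eq
        apply Finset.sum_congr rfl
        intro m hm
        simp only [mem_range] at hm
        simp only [hδ]
        rw [if_pos (by omega : m < len), if_pos (by omega : m + 1 < len),
          show u + 1 + (m + 1) = u + 1 + m + 1 by omega]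
        exact hedge (u+1+m) (by omega)
      · simp only [hδ]
        rw [if_pos (by omega : len - 1 < len), if_neg (by omega : ¬ (len - 1 + 1 < len)),
          show u + 1 + (len - 1) = u' by omega]
        exact hsh1
    have hBle : wsum w η (r - len) ≤ ((b : ℝ) : EReal) := by
      have e0 : wsum w η (r - len) = ((∑ m ∈ range u, w (η m) (η (m+1))) + w (η u) (η (u+1)))
          + ∑ m ∈ Ico (u+1) (r - len), w (η m) (η (m+1)) := by
        rw [wsum, Finset.range_eq_Ico,
          ← Finset.sum_Ico_consecutive _ (Nat.zero_le (u+1)) (by omega : u+1 ≤ r - len),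
          ← Finset.range_eq_Ico, Finset.sum_range_succ]
      rw [e0, hb, EReal.coe_add, EReal.coe_add, coe_sum, coe_sum]
      apply add_le_add (add_le_add ?_ ?_) ?_
      · apply le_of_eq
        apply Finset.sum_congr rfl
        intro m hm
        simp only [mem_range] at hm
        simp only [hη]
        rw [if_pos (by omega : m ≤ u), if_pos (by omega : m + 1 ≤ u)]
        exact hedge m (by omega)
      · simp only [hη]
        rw [if_pos (le_refl u), if_neg (by omega : ¬ (u+1 ≤ u)),
          show u + 1 + len = u' + 1 by omega]
        exact hsh2
      · apply le_of_eq
        apply Finset.sum_congr rfl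
        intro m hm
        simp only [mem_Ico] at hm
        simp only [hη]
        rw [if_neg (by omega : ¬ (m ≤ u)), if_neg (by omega : ¬ (m + 1 ≤ u)),
          show m + 1 + len = m + len + 1 by omega]
        exact hedge (m+len) (by omega)
    -- a + b equals the total cycle weight
    have i1 : ∑ m ∈ Ico (u+1) u', c m = ∑ m ∈ range (len - 1), c (u+1+m) := by
      rw [Finset.sum_Ico_eq_sum_range, show u' - (u+1) = len - 1 by omega]
    have i2 : ∑ m ∈ Ico (u'+1) r, c m = ∑ m ∈ Ico (u+1) (r - len), c (m + len) := by
      rw [Finset.sum_Ico_eq_sum_range, Finset.sum_Ico_eq_sum_range,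
        show r - len - (u+1) = r - (u'+1) by omega]
      apply Finset.sum_congr rfl
      intro m _
      congr 1
      omega
    have i3 : ∑ m ∈ range r, c m = (∑ m ∈ range u, c m) + c u + (∑ m ∈ Ico (u+1) u', c m)
        + c u' + ∑ m ∈ Ico (u'+1) r, c m := by
      rw [Finset.range_eq_Ico, ← Finset.sum_Ico_consecutive _ (Nat.zero_le u) (by omega : u ≤ r),
        Finset.sum_eq_sum_Ico_succ_bot (by omega : u < r),
        ← Finset.sum_Ico_consecutive _ (by omega : u + 1 ≤ u') (by omega : u' ≤ r),
        Finset.sum_eq_sum_Ico_succ_bot (by omega : u' < r), ← Finset.range_eq_Ico]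
      ring
    have hcu : c u = ρ k (γ u) - ρ k (γ (u+1)) := by simp only [hc, hk]
    have hcu' : c u' = ρ k (γ u') - ρ k (γ (u'+1)) := by simp only [hc, ← hkeq]
    have hab : a + b = ∑ m ∈ range r, c m := by
      rw [ha, hb, i3, hcu, hcu', i1, i2]; ring
    -- both subcycles are nonnegative by IH
    have hA0 := IH len (by omega) δ (by omega) hδc
    have hB0 := IH (r - len) (by omega) η (by omega) hηc
    have h0 : (0:EReal) ≤ ((a:ℝ):EReal) + ((b:ℝ):EReal) :=
      le_trans (le_trans (by simp) (add_le_add hA0 hB0)) (add_le_add hAle hBle)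
    rw [← EReal.coe_add] at h0
    have h0' : (0:ℝ) ≤ a + b := by exact_mod_cast h0
    rw [hab] at h0'
    linarith
  -- build an improving decomposition : contradiction with optimality
  set ind : Fin n → Fin n → ℝ := fun a i => if a = i then 1 else 0 with hind
  set d : ℕ → Fin n → ℝ := fun u i => ind (γ (u+1)) i - ind (γ u) i with hd
  set v : Fin K → Fin n → ℝ :=
    fun k i => ustar k i + ∑ u ∈ range r, if kf u = k then d u i else 0 with hv
  have husk : ∀ k, (∀ i, ustar k i = 0 ∨ ustar k i = 1) ∧ (∑ i, ustar k i) = (R k : ℝ)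
      ∧ ∀ i ∈ J k, ustar k i = 0 := by
    intro k; have := hu k; rwa [hF k] at this
  have hvmem : ∀ k, v k ∈ F k := by
    intro k
    rw [hF k]
    by_cases hex : ∃ u, u < r ∧ kf u = k
    · obtain ⟨u0, hu0r, hku0⟩ := hex
      have hvk : ∀ i, v k i = ustar k i + d u0 i := by
        intro i
        simp only [hv]
        congr 1
        rw [Finset.sum_eq_single_of_mem u0 (mem_range.mpr hu0r) (fun b hb hbne => ?_),
          if_pos hku0]
        rw [if_neg]
        intro hkb
        rcases lt_trichotomy b u0 with h | h | h
        · exact key3 b u0 h hu0r (hkb.trans hku0.symm)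
        · exact hbne h
        · exact key3 u0 b h (mem_range.mp hb) (hku0.trans hkb.symm)
      obtain ⟨h1, h2, h3, _⟩ := hkf u0 hu0r
      rw [hku0] at h1 h2 h3
      have hne : γ u0 ≠ γ (u0+1) := fun h => by rw [h, h2] at h1; norm_num at h1
      refine ⟨?_, ?_, ?_⟩
      · intro i
        rw [hvk i]
        simp only [hd, hind]
        by_cases hi1 : γ (u0+1) = i
        · rw [if_pos hi1, if_neg (fun h => hne (h.trans hi1.symm)), ← hi1, h2]
          right; norm_num
        · rw [if_neg hi1]
          by_cases hi0 : γ u0 = i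
          · rw [if_pos hi0, ← hi0, h1]; left; norm_num
          · rw [if_neg hi0]
            rcases (husk k).1 i with h | h
            · left; rw [h]; norm_num
            · right; rw [h]; norm_num
      · rw [Finset.sum_congr rfl (fun i _ => hvk i), Finset.sum_add_distrib, (husk k).2.1]
        have hz : ∑ i, d u0 i = 0 := by
          simp only [hd, hind]
          rw [Finset.sum_sub_distrib, Finset.sum_ite_eq, Finset.sum_ite_eq]
          simp
        rw [hz, add_zero]
      · intro i hi
        rw [hvk i, (husk k).2.2 i hi]
        simp only [hd, hind]
        rw [if_neg (fun h : γ (u0+1) = i => h3 (h ▸ hi)),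
          if_neg (fun h : γ u0 = i => by
            rw [← h] at hi
            rw [(husk k).2.2 _ hi] at h1
            norm_num at h1)]
        norm_num
    · push_neg at hex
      have hvi : v k = ustar k := by
        funext i
        simp only [hv]
        rw [Finset.sum_eq_zero, add_zero]
        intro b hb
        rw [if_neg (hex b (mem_range.mp hb))]
      rw [hvi]
      have := hu k; rwa [hF k] at this
  have hvsum : (∑ k, v k) = (∑ k, ustar k) := by
    funext i
    rw [Finset.sum_apply, Finset.sum_apply]
    simp only [hv]
    rw [Finset.sum_add_distrib]
    have hz : ∑ k, ∑ b ∈ range r, (if kf b = k then d b i else 0) = 0 := by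
      rw [Finset.sum_comm]
      rw [Finset.sum_congr rfl (fun b _ => Finset.sum_ite_eq univ (kf b) (fun _ => d b i))]
      simp only [Finset.mem_univ, if_true]
      simp only [hd]
      rw [Finset.sum_sub_distrib,
        sum_range_shift (fun m => ind (γ m) i) r (by beta_reduce; rw [hγ]), sub_self]
    rw [hz, add_zero]
  have hobj : ∑ k, ∑ i, ρ k i * v k i
      = (∑ k, ∑ i, ρ k i * ustar k i) - ∑ m ∈ range r, c m := by
    simp only [hv, mul_add, Finset.sum_add_distrib]
    have step1 : ∀ b : ℕ, b < r → ∑ k, (if kf b = k then ∑ i, ρ k i * d b i else 0)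
        = - c b := by
      intro b hb
      rw [Finset.sum_ite_eq univ (kf b) (fun k => ∑ i, ρ k i * d b i)]
      simp only [Finset.mem_univ, if_true]
      simp only [hd, hind, mul_sub, mul_ite, mul_one, mul_zero]
      rw [Finset.sum_sub_distrib, Finset.sum_ite_eq, Finset.sum_ite_eq]
      simp only [Finset.mem_univ, if_true]
      simp only [hc]
      ring
    have e1 : ∑ k, ∑ i, ρ k i * ∑ b ∈ range r, (if kf b = k then d b i else 0)
        = ∑ k, ∑ i, ∑ b ∈ range r, (if kf b = k then ρ k i * d b i else 0) := by
      apply Finset.sum_congr rfl; intro k _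
      apply Finset.sum_congr rfl; intro i _
      rw [Finset.mul_sum]
      apply Finset.sum_congr rfl; intro b _
      rw [mul_ite, mul_zero]
    have e2 : ∑ k, ∑ i, ∑ b ∈ range r, (if kf b = k then ρ k i * d b i else 0)
        = ∑ b ∈ range r, ∑ k, ∑ i, (if kf b = k then ρ k i * d b i else 0) := by
      have e2a : ∀ k : Fin K, (∑ i : Fin n, ∑ b ∈ range r,
          (if kf b = k then ρ k i * d b i else 0))
          = ∑ b ∈ range r, ∑ i : Fin n, (if kf b = k then ρ k i * d b i else 0) :=
        fun k => Finset.sum_comm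
      rw [Finset.sum_congr rfl (fun k _ => e2a k)]
      exact Finset.sum_comm
    have e3 : ∑ b ∈ range r, ∑ k, ∑ i, (if kf b = k then ρ k i * d b i else 0)
        = ∑ b ∈ range r, ∑ k, (if kf b = k then ∑ i, ρ k i * d b i else 0) := by
      apply Finset.sum_congr rfl; intro b _
      apply Finset.sum_congr rfl; intro k _
      by_cases h : kf b = k
      · simp [h]
      · simp [h]
    have e4 : ∑ b ∈ range r, ∑ k, (if kf b = k then ∑ i, ρ k i * d b i else 0)
        = - ∑ m ∈ range r, c m := by
      rw [← Finset.sum_neg_distrib]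
      apply Finset.sum_congr rfl; intro b hb
      exact step1 b (mem_range.mp hb)
    have hX := (e1.trans e2).trans (e3.trans e4)
    rw [hX]
    ring
  have hfin := hopt v hvmem hvsum
  rw [hobj] at hfin
  linarith

/-- nonnegative cycles in the modified graph, for M large -/
lemma no_neg_cycle' {n : ℕ} (w : Fin n → Fin n → EReal) (C : ℝ) (hC : 1 ≤ C)
    (hlow : ∀ α β : Fin n, w α β ≠ ⊤ → ((-C : ℝ) : EReal) ≤ w α β)
    (hwcyc : ∀ r : ℕ, ∀ γ : ℕ → Fin n, 1 ≤ r → γ r = γ 0 → 0 ≤ wsum w γ r)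
    (hwbot : ∀ α β, w α β ≠ ⊥)
    (s : Fin n) (M : ℝ) (hM : (n+1) * C ≤ M)
    (w' : Fin n → Fin n → EReal)
    (hw' : ∀ α β, w' α β = if α = s ∧ β ≠ s ∧ w α β = ⊤ then ((M:ℝ):EReal) else w α β) :
    ∀ r : ℕ, ∀ γ : ℕ → Fin n, 1 ≤ r → γ r = γ 0 → 0 ≤ wsum w' γ r := by
  classical
  have hM0 : 0 < M := lt_of_lt_of_le (by positivity) hM
  have hbot' : ∀ α β, w' α β ≠ ⊥ := by
    intro α β
    rw [hw' α β]
    split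
    · exact EReal.coe_ne_bot M
    · exact hwbot α β
  intro r
  induction r using Nat.strong_induction_on with
  | _ r IH =>
  intro γ hr hγ
  by_contra hneg
  push_neg at hneg
  have hnb : ∀ u ∈ range r, w' (γ u) (γ (u+1)) ≠ ⊥ := fun u _ => hbot' _ _
  have hnt : ∀ u, u < r → w' (γ u) (γ (u+1)) ≠ ⊤ := by
    intro u hur ht
    have := sum_eq_top (range r) _ hnb u (mem_range.mpr hur) ht
    rw [wsum, this] at hneg
    exact absurd hneg (by simp)
  -- distinct vertices, else split
  have key2 : ∀ i p, i < p → p < r → γ i ≠ γ p := by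
    intro i p hip hpr heq
    have hsplit := wsum_split w' γ hip hpr.le heq
    have hA := IH (p - i) (by omega) (fun m => γ (i + m)) (by omega)
      (by beta_reduce; rw [show i + (p - i) = p by omega, ← heq, Nat.add_zero])
    have hB := IH (r - (p - i)) (by omega)
      (fun m => if m ≤ i then γ m else γ (m + (p - i))) (by omega)
      (by
        beta_reduce
        rw [if_neg (by omega : ¬ (r - (p - i) ≤ i)), if_pos (Nat.zero_le i),
          show r - (p - i) + (p - i) = r by omega, hγ])
    rw [hsplit] at hneg
    have : (0 : EReal) ≤ wsum w' (fun m => γ (i + m)) (p - i)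
        + wsum w' (fun m => if m ≤ i then γ m else γ (m + (p - i))) (r - (p - i)) :=
      le_trans (by simp) (add_le_add hA hB)
    exact absurd hneg (not_lt.mpr this)
  have hrn : r ≤ n := by
    have hinj : Function.Injective (fun m : Fin r => γ m) := by
      intro a b hab
      by_contra hne
      rcases lt_or_gt_of_ne (fun h : (a:ℕ) = (b:ℕ) => hne (Fin.ext h)) with h | h
      · exact key2 a b h b.isLt hab
      · exact key2 b a h a.isLt hab.symm
    simpa using Fintype.card_le_of_injective _ hinj
  -- real edge values
  set x : ℕ → ℝ := fun u => (w' (γ u) (γ (u+1))).toReal with hx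
  have hedge : ∀ u, u < r → w' (γ u) (γ (u+1)) = ((x u : ℝ) : EReal) := by
    intro u hur
    rw [hx]
    exact (EReal.coe_toReal (hnt u hur) (hbot' _ _)).symm
  have hSsum : wsum w' γ r = ((∑ u ∈ range r, x u : ℝ) : EReal) := by
    rw [wsum, coe_sum]
    exact Finset.sum_congr rfl fun u hu' => hedge u (mem_range.mp hu')
  have hS : (∑ u ∈ range r, x u) < 0 := by
    rw [hSsum] at hneg
    exact_mod_cast hneg
  have hlowx : ∀ u, u < r → γ u ≠ s ∨ ¬ (γ (u+1) ≠ s ∧ w s (γ (u+1)) = ⊤) → -C ≤ x u := by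
    intro u hur hcase
    have hne : ¬ ((γ u) = s ∧ γ (u+1) ≠ s ∧ w (γ u) (γ (u+1)) = ⊤) := by
      rcases hcase with h | h
      · exact fun hcc => h hcc.1
      · intro hcc
        exact h ⟨hcc.2.1, by rw [← hcc.1]; exact hcc.2.2⟩
    have hww : w' (γ u) (γ (u+1)) = w (γ u) (γ (u+1)) := by rw [hw' _ _, if_neg hne]
    have hwt : w (γ u) (γ (u+1)) ≠ ⊤ := by
      rw [← hww]; exact hnt u hur
    have := hlow _ _ hwt
    rw [← hww, hedge u hur] at this
    exact_mod_cast this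
  by_cases hMedge : ∃ u, u < r ∧ γ u = s ∧ γ (u+1) ≠ s ∧ w s (γ (u+1)) = ⊤
  · obtain ⟨u0, hu0r, hu0s, hu0ns, hu0t⟩ := hMedge
    have hxu0 : x u0 = M := by
      have : w' (γ u0) (γ (u0+1)) = ((M:ℝ):EReal) := by
        rw [hw' _ _, if_pos ⟨hu0s, hu0ns, by rw [hu0s]; exact hu0t⟩]
      rw [hx]; beta_reduce; rw [this, EReal.toReal_coe]
    have hothers : ∀ u ∈ (range r).erase u0, -C ≤ x u := by
      intro u hu'
      have hur := mem_range.mp (Finset.mem_of_mem_erase hu')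
      have hune : u ≠ u0 := Finset.ne_of_mem_erase hu'
      apply hlowx u hur
      left
      intro hus
      rcases lt_or_gt_of_ne hune with h | h
      · exact key2 u u0 h hu0r (by rw [hus, hu0s])
      · exact key2 u0 u h hur (by rw [hus, hu0s])
    have hsum2 : ∑ u ∈ range r, x u = x u0 + ∑ u ∈ (range r).erase u0, x u := by
      rw [Finset.add_sum_erase _ _ (mem_range.mpr hu0r)]
    have hlower : ((range r).erase u0).card • (-C) ≤ ∑ u ∈ (range r).erase u0, x u :=
      Finset.card_nsmul_le_sum _ _ _ hothers
    have hcard : ((range r).erase u0).card = r - 1 := by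
      rw [Finset.card_erase_of_mem (mem_range.mpr hu0r), Finset.card_range]
    rw [hcard, nsmul_eq_mul] at hlower
    have hcast : ((r - 1 : ℕ) : ℝ) ≤ (n : ℝ) := by
      have : r - 1 ≤ n := by omega
      exact_mod_cast this
    have hCpos : (0:ℝ) ≤ C := by linarith
    nlinarith [hS, hsum2, hlower, hxu0, hM, hcast]
  · push_neg at hMedge
    have : wsum w' γ r = wsum w γ r := by
      rw [wsum, wsum]
      apply Finset.sum_congr rfl
      intro u hu'
      rw [hw' _ _, if_neg]
      rintro ⟨h1, h2, h3⟩
      exact (hMedge u (mem_range.mp hu') h1 h2) (by rw [← h1]; exact h3)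
    rw [this] at hneg
    exact absurd hneg (not_lt.mpr (hwcyc r γ hr hγ))

lemma path_extend {n : ℕ} (w' : Fin n → Fin n → EReal) (q : ℕ) (π : ℕ → Fin n) (b : Fin n) :
    wsum w' (fun m => if m ≤ q then π m else b) (q+1) = wsum w' π q + w' (π q) b := by
  rw [wsum, Finset.sum_range_succ, wsum]
  congr 1
  · apply Finset.sum_congr rfl
    intro m hm
    simp only [mem_range] at hm
    rw [if_pos (by omega : m ≤ q), if_pos (by omega : m + 1 ≤ q)]
  · rw [if_pos (le_refl q), if_neg (by omega : ¬ (q + 1 ≤ q))]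

lemma path_shorten {n : ℕ} (w' : Fin n → Fin n → EReal)
    (hcyc : ∀ r : ℕ, ∀ γ : ℕ → Fin n, 1 ≤ r → γ r = γ 0 → 0 ≤ wsum w' γ r)
    (s t : Fin n) (ht : t ≠ s) :
    ∀ q : ℕ, ∀ β : ℕ → Fin n, 1 ≤ q → β 0 = s → β q = t →
    ∃ q' : ℕ, ∃ β' : ℕ → Fin n, 1 ≤ q' ∧ q' ≤ n ∧ β' 0 = s ∧ β' q' = t ∧
      wsum w' β' q' ≤ wsum w' β q := by
  intro q
  induction q using Nat.strong_induction_on with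
  | _ q IH =>
  intro β hq h0 hqt
  by_cases hqn : q ≤ n
  · exact ⟨q, β, hq, hqn, h0, hqt, le_refl _⟩
  · have hninj : ¬ Function.Injective (fun m : Fin (n+1) => β m) := by
      intro hinj
      have := Fintype.card_le_of_injective _ hinj
      simp at this
    rw [Function.not_injective_iff] at hninj
    obtain ⟨a, b, hab, hne⟩ := hninj
    obtain ⟨i, p, hip, hpn, heq⟩ : ∃ i p : ℕ, i < p ∧ p ≤ n ∧ β i = β p := by
      rcases lt_or_gt_of_ne (fun h : (a:ℕ) = (b:ℕ) => hne (Fin.ext h)) with h | h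
      · exact ⟨a, b, h, by omega, hab⟩
      · exact ⟨b, a, h, by omega, hab.symm⟩
    have hpq : p ≤ q := by omega
    have hsplit := wsum_split w' β hip hpq heq
    have hmid := hcyc (p - i) (fun m => β (i + m)) (by omega)
      (by beta_reduce; rw [show i + (p - i) = p by omega, ← heq, Nat.add_zero])
    set η : ℕ → Fin n := fun m => if m ≤ i then β m else β (m + (p - i)) with hη
    have hη0 : η 0 = s := by
      simp only [hη]; rw [if_pos (Nat.zero_le i)]; exact h0
    have hηq : η (q - (p - i)) = t := by
      simp only [hη]
      rw [if_neg (by omega : ¬ (q - (p - i) ≤ i)), show q - (p - i) + (p - i) = q by omega]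
      exact hqt
    obtain ⟨q', β', hq1, hq2, hb0, hbt, hle⟩ := IH (q - (p - i)) (by omega) η (by omega) hη0 hηq
    refine ⟨q', β', hq1, hq2, hb0, hbt, le_trans hle ?_⟩
    rw [hsplit]
    exact le_add_of_nonneg_left hmid

lemma dist_exists {n : ℕ} (w' : Fin n → Fin n → EReal)
    (hcyc : ∀ r : ℕ, ∀ γ : ℕ → Fin n, 1 ≤ r → γ r = γ 0 → 0 ≤ wsum w' γ r)
    (hbot : ∀ α β, w' α β ≠ ⊥) (s t : Fin n) (ht : t ≠ s) (hst : w' s t ≠ ⊤) :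
    ∃ y : ℝ, ((y:EReal) ∈ {c : EReal | ∃ (q : ℕ) (β : ℕ → Fin n), 1 ≤ q ∧ β 0 = s ∧ β q = t ∧
        c = wsum w' β q}
      ∧ ∀ c ∈ {c : EReal | ∃ (q : ℕ) (β : ℕ → Fin n), 1 ≤ q ∧ β 0 = s ∧ β q = t ∧
        c = wsum w' β q}, (y:EReal) ≤ c) := by
  classical
  have hn : 1 ≤ n := s.pos
  set S' : Set EReal := {c : EReal | ∃ (q : ℕ) (β : ℕ → Fin n),
    1 ≤ q ∧ q ≤ n ∧ β 0 = s ∧ β q = t ∧ c = wsum w' β q} with hS'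
  have hfin : S'.Finite := by
    apply Set.Finite.subset (Set.finite_range
      (fun pf : Fin (n+1) × (Fin (n+1) → Fin n) =>
        wsum w' (fun m => pf.2 ⟨min m n, by omega⟩) (pf.1 : ℕ)))
    rintro c ⟨q, β, hq1, hqn, h0, hqt, rfl⟩
    refine ⟨⟨⟨q, by omega⟩, fun j => β (min (j:ℕ) q)⟩, ?_⟩
    simp only
    rw [wsum, wsum]
    apply Finset.sum_congr rfl
    intro u hu
    have huq : u < q := mem_range.mp hu
    show w' (β (min (min u n) q)) (β (min (min (u+1) n) q)) = w' (β u) (β (u+1))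
    rw [show min (min u n) q = u by omega, show min (min (u+1) n) q = u + 1 by omega]
  have hdirect : w' s t ∈ S' := by
    refine ⟨1, (fun m => if m = 0 then s else t), le_refl 1, hn, by simp, by simp, ?_⟩
    rw [wsum, Finset.sum_range_one]
    norm_num
  have hne : S'.Nonempty := ⟨_, hdirect⟩
  set y := sInf S' with hy
  have hymem : y ∈ S' := hne.csInf_mem hfin
  have hyle : ∀ c ∈ S', y ≤ c := fun c hc => sInf_le hc
  have hybot : y ≠ ⊥ := by
    obtain ⟨q, β, hq1, hqn, h0, hqt, hv⟩ := hymem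
    rw [hv, wsum]
    exact sum_ne_bot _ _ (fun u _ => hbot _ _)
  have hytop : y ≠ ⊤ := by
    intro h
    have hle := hyle (w' s t) hdirect
    rw [h] at hle
    exact hst (top_le_iff.mp hle)
  have hcoe : ((y.toReal : ℝ) : EReal) = y := EReal.coe_toReal hytop hybot
  refine ⟨y.toReal, ?_, ?_⟩
  · rw [hcoe]
    obtain ⟨q, β, hq1, hqn, h0, hqt, hv⟩ := hymem
    exact ⟨q, β, hq1, h0, hqt, hv⟩
  · rintro c ⟨q, β, hq1, h0, hqt, rfl⟩
    obtain ⟨q', β', h1, h2, h3, h4, h5⟩ := path_shorten w' hcyc s t ht q β hq1 h0 hqt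
    rw [hcoe]
    exact le_trans (hyle _ ⟨q', β', h1, h2, h3, h4, rfl⟩) h5

lemma opt_of_pairwise {n : ℕ} (p u v : Fin n → ℝ)
    (hu01 : ∀ i, u i = 0 ∨ u i = 1) (hv01 : ∀ i, v i = 0 ∨ v i = 1)
    (hsum : ∑ i, u i = ∑ i, v i)
    (hpw : ∀ α β, u α = 1 → u β = 0 → v β = 1 → p β ≤ p α) :
    ∑ i, p i * v i ≤ ∑ i, p i * u i := by
  classical
  set Su : Finset (Fin n) := Finset.univ.filter (fun i => u i = 1) with hSu
  set Sv : Finset (Fin n) := Finset.univ.filter (fun i => v i = 1) with hSv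
  have key : ∀ (f : Fin n → ℝ), (∀ i, f i = 0 ∨ f i = 1) →
      (∀ g : Fin n → ℝ, ∑ i, g i * f i = ∑ i ∈ univ.filter (fun i => f i = 1), g i) := by
    intro f hf g
    rw [← Finset.sum_filter_add_sum_filter_not univ (fun i => f i = 1) (fun i => g i * f i)]
    have h1 : ∑ i ∈ univ.filter (fun i => f i = 1), g i * f i
        = ∑ i ∈ univ.filter (fun i => f i = 1), g i := by
      apply Finset.sum_congr rfl; intro i hi
      rw [(Finset.mem_filter.mp hi).2, mul_one]
    have h2 : ∑ i ∈ univ.filter (fun i => ¬ f i = 1), g i * f i = 0 := by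
      apply Finset.sum_eq_zero; intro i hi
      rcases hf i with h | h
      · rw [h, mul_zero]
      · exact absurd h (Finset.mem_filter.mp hi).2
    rw [h1, h2, add_zero]
  have hsum_u : ∑ i, p i * u i = ∑ i ∈ Su, p i := key u hu01 p
  have hsum_v : ∑ i, p i * v i = ∑ i ∈ Sv, p i := key v hv01 p
  have hcard_u : ∑ i, u i = (Su.card : ℝ) := by
    have := key u hu01 (fun _ => (1:ℝ))
    simp only [one_mul] at this
    rw [this, Finset.sum_const, nsmul_eq_mul, mul_one]
  have hcard_v : ∑ i, v i = (Sv.card : ℝ) := by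
    have := key v hv01 (fun _ => (1:ℝ))
    simp only [one_mul] at this
    rw [this, Finset.sum_const, nsmul_eq_mul, mul_one]
  have hcard : Su.card = Sv.card := by
    have : (Su.card : ℝ) = (Sv.card : ℝ) := by rw [← hcard_u, ← hcard_v, hsum]
    exact_mod_cast this
  have hcards : (Su \ Sv).card = (Sv \ Su).card := by
    have h1 := Finset.card_sdiff_add_card_inter Su Sv
    have h2 := Finset.card_sdiff_add_card_inter Sv Su
    rw [Finset.inter_comm] at h2
    omega
  rw [hsum_u, hsum_v, ← Finset.sum_inter_add_sum_sdiff Sv Su p,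
    ← Finset.sum_inter_add_sum_sdiff Su Sv p, Finset.inter_comm]
  apply add_le_add (le_refl _)
  rcases Finset.eq_empty_or_nonempty (Su \ Sv) with he | hne
  · have hve : (Sv \ Su) = ∅ :=
      Finset.card_eq_zero.mp (by rw [← hcards, he, Finset.card_empty])
    rw [hve, he]
  · set m := (Su \ Sv).inf' hne p with hm
    have hb1 : ∑ i ∈ Sv \ Su, p i ≤ (Sv \ Su).card • m := by
      apply Finset.sum_le_card_nsmul
      intro b hb
      rw [hm]
      apply Finset.le_inf'
      intro a ha
      have hua : u a = 1 := (Finset.mem_filter.mp (Finset.mem_sdiff.mp ha).1).2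
      have hvb : v b = 1 := (Finset.mem_filter.mp (Finset.mem_sdiff.mp hb).1).2
      have hub : u b = 0 := by
        rcases hu01 b with h | h
        · exact h
        · exact absurd (Finset.mem_filter.mpr ⟨Finset.mem_univ b, h⟩)
            (Finset.mem_sdiff.mp hb).2
      exact hpw a b hua hub hvb
    have hb2 : (Su \ Sv).card • m ≤ ∑ i ∈ Su \ Sv, p i :=
      Finset.card_nsmul_le_sum _ _ _ (fun a ha => Finset.inf'_le _ ha)
    rw [hcards] at hb2
    exact le_trans hb1 hb2

end Stmt16
open Stmt16 Finset

/-- From an optimal decomposition `N = ∑ₖ uₖ*`, with exchange-graph weights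
`w_{αβ} = min {ρₖ(α) - ρₖ(β) : uₖ*(α)=1, uₖ*(β)=0, β ∉ Jₖ}` (`+∞` if no such
`k`), fix a source `s` and, for `M` large, modify `w` by setting `w'_{st} = M`
whenever `t ≠ s` and `w_{st} = +∞`. Then for `M` large enough: (a) every cycle
of the modified graph has nonnegative total weight; and (b) the vector `y*`
of single-source shortest-path distances from `s` (with `y*_s = 0`), which is
a finite attained minimum, makes every `uₖ*` optimal over `Fₖ` for the price
vector `y*`. -/
theorem stmt_16 (n K : ℕ) (R : Fin K → ℕ) (hR : ∀ k, R k ≤ n)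
    (J : Fin K → Set (Fin n)) (ρ : Fin K → Fin n → ℝ)
    (F : Fin K → Set (Fin n → ℝ))
    (hF : ∀ k, F k = {u : Fin n → ℝ |
      (∀ i, u i = 0 ∨ u i = 1) ∧ (∑ i, u i) = (R k : ℝ) ∧ ∀ i ∈ J k, u i = 0})
    (ustar : Fin K → Fin n → ℝ) (hu : ∀ k, ustar k ∈ F k)
    (hopt : ∀ v : Fin K → Fin n → ℝ, (∀ k, v k ∈ F k) →
      (∑ k, v k) = (∑ k, ustar k) →
      ∑ k, ∑ i, ρ k i * v k i ≤ ∑ k, ∑ i, ρ k i * ustar k i)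
    (w : Fin n → Fin n → EReal)
    (hw : ∀ α β, w α β = sInf {x : EReal | ∃ k : Fin K,
      ustar k α = 1 ∧ ustar k β = 0 ∧ β ∉ J k ∧ x = ((ρ k α - ρ k β : ℝ) : EReal)})
    (s : Fin n) :
    ∃ M₀ : ℝ, 0 < M₀ ∧ ∀ M : ℝ, M₀ ≤ M →
      ∀ w' : Fin n → Fin n → EReal,
      (∀ α β, w' α β =
        if α = s ∧ β ≠ s ∧ w α β = ⊤ then ((M : ℝ) : EReal) else w α β) →
      ((∀ (r : ℕ) (γ : ℕ → Fin n), 1 ≤ r → γ r = γ 0 →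
          (0 : EReal) ≤ ∑ u ∈ Finset.range r, w' (γ u) (γ (u + 1)))
      ∧ ∃ ystar : Fin n → ℝ, ystar s = 0
          ∧ (∀ t : Fin n, t ≠ s →
              ((ystar t : EReal) ∈ {c : EReal | ∃ (q : ℕ) (β : ℕ → Fin n),
                  1 ≤ q ∧ β 0 = s ∧ β q = t ∧
                  c = ∑ u ∈ Finset.range q, w' (β u) (β (u + 1))}
              ∧ ∀ c ∈ {c : EReal | ∃ (q : ℕ) (β : ℕ → Fin n),
                  1 ≤ q ∧ β 0 = s ∧ β q = t ∧
                  c = ∑ u ∈ Finset.range q, w' (β u) (β (u + 1))},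
                (ystar t : EReal) ≤ c))
          ∧ ∀ k, ∀ v ∈ F k,
              ∑ i, (ρ k i + ystar i) * v i ≤ ∑ i, (ρ k i + ystar i) * ustar k i) := by
  classical
  have hw2 : ∀ α β, w α β = sInf (wset J ρ ustar α β) := by
    intro α β
    rw [hw]
    rfl
  set C : ℝ := 1 + ∑ k, ∑ i, |ρ k i| with hCdef
  have habs : (0:ℝ) ≤ ∑ k, ∑ i, |ρ k i| :=
    Finset.sum_nonneg fun k _ => Finset.sum_nonneg fun i _ => abs_nonneg _
  have hC : 1 ≤ C := by rw [hCdef]; linarith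
  have hlow : ∀ α β : Fin n, w α β ≠ ⊤ → ((-C : ℝ) : EReal) ≤ w α β := by
    intro α β htop
    obtain ⟨k, h1, h2, _, h4⟩ := w_attained J ρ ustar w hw2 htop
    rw [h4]
    rw [EReal.coe_le_coe_iff]
    have hne : α ≠ β := by
      intro h
      rw [h, h2] at h1
      norm_num at h1
    have hs1 : ∑ i ∈ ({α, β} : Finset (Fin n)), |ρ k i| ≤ ∑ i, |ρ k i| :=
      Finset.sum_le_sum_of_subset_of_nonneg (Finset.subset_univ _)
        (fun i _ _ => abs_nonneg _)
    rw [Finset.sum_pair hne] at hs1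
    have hs2 : ∑ i, |ρ k i| ≤ ∑ k', ∑ i, |ρ k' i| :=
      Finset.single_le_sum (f := fun k' => ∑ i, |ρ k' i|)
        (fun k' _ => Finset.sum_nonneg fun i _ => abs_nonneg _) (Finset.mem_univ k)
    have ha := neg_abs_le (ρ k α)
    have hb := le_abs_self (ρ k β)
    rw [hCdef]
    linarith
  have hwcyc := no_neg_cycle R J ρ F hF ustar hu hopt w hw2
  have hwbot := w_ne_bot J ρ ustar w hw2
  refine ⟨(n+1) * C, by positivity, ?_⟩
  intro M hM w' hw'
  have hacyc := no_neg_cycle' w C hC hlow hwcyc hwbot s M hM w' hw'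
  have hbot' : ∀ α β, w' α β ≠ ⊥ := by
    intro α β
    rw [hw' α β]
    split
    · exact EReal.coe_ne_bot M
    · exact hwbot α β
  have hstfin : ∀ t : Fin n, t ≠ s → w' s t ≠ ⊤ := by
    intro t htne
    rw [hw' s t]
    split
    · exact EReal.coe_ne_top M
    · rename_i hcond
      push_neg at hcond
      exact hcond rfl htne
  have hdist : ∀ t : Fin n, ∃ y : ℝ, t ≠ s →
      ((y:EReal) ∈ {c : EReal | ∃ (q : ℕ) (β : ℕ → Fin n), 1 ≤ q ∧ β 0 = s ∧ β q = t ∧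
        c = wsum w' β q}
      ∧ ∀ c ∈ {c : EReal | ∃ (q : ℕ) (β : ℕ → Fin n), 1 ≤ q ∧ β 0 = s ∧ β q = t ∧
        c = wsum w' β q}, (y:EReal) ≤ c) := by
    intro t
    by_cases ht : t = s
    · exact ⟨0, fun h => absurd ht h⟩
    · obtain ⟨y, hy⟩ := dist_exists w' hacyc hbot' s t ht (hstfin t ht)
      exact ⟨y, fun _ => hy⟩
  choose yd hyd using hdist
  set ystar : Fin n → ℝ := fun t => if t = s then 0 else yd t with hys
  have hysv : ∀ t : Fin n, t ≠ s → ystar t = yd t := by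
    intro t ht
    simp only [hys]
    rw [if_neg ht]
  have hss0 : ystar s = 0 := by simp [hys]
  -- pairwise inequality
  have hpair : ∀ (k : Fin K) (α β : Fin n), ustar k α = 1 → ustar k β = 0 → β ∉ J k →
      ρ k β + ystar β ≤ ρ k α + ystar α := by
    intro k α β h1 h2 h3
    have hwle : w α β ≤ ((ρ k α - ρ k β : ℝ) : EReal) := w_le J ρ ustar w hw2 h1 h2 h3
    have hab : α ≠ β := by
      intro h
      rw [h, h2] at h1
      norm_num at h1
    by_cases hbs : β = s
    · have has : α ≠ s := fun h => hab (h.trans hbs.symm)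
      rw [hbs] at hwle ⊢
      obtain ⟨hmem, _⟩ := hyd α has
      obtain ⟨q, π, hq1, hπ0, hπq, hval⟩ := hmem
      have hclosed : (fun m => if m ≤ q then π m else s) (q + 1)
          = (fun m => if m ≤ q then π m else s) 0 := by
        beta_reduce
        rw [if_neg (by omega : ¬ (q+1 ≤ q)), if_pos (Nat.zero_le q), hπ0]
      have h0 := hacyc (q+1) (fun m => if m ≤ q then π m else s) (by omega) hclosed
      have h0' : (0 : EReal) ≤ wsum w' π q + w' (π q) s := by
        rw [← path_extend w' q π s]
        exact h0
      rw [← hval, hπq] at h0'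
      have hws : w' α s = w α s := by
        rw [hw' α s, if_neg]
        rintro ⟨_, hss, _⟩
        exact hss rfl
      have h0'' : (0 : EReal) ≤ ((yd α : ℝ) : EReal) + ((ρ k α - ρ k s : ℝ) : EReal) :=
        le_trans h0' (add_le_add (le_refl _) (by rw [hws]; exact hwle))
      rw [← EReal.coe_add] at h0''
      have hr : (0:ℝ) ≤ yd α + (ρ k α - ρ k s) := by exact_mod_cast h0''
      rw [hysv α has, hss0]
      linarith
    · obtain ⟨hmemβ, hminβ⟩ := hyd β hbs
      by_cases has : α = s
      · subst has
        have hwtop : w α β ≠ ⊤ := ne_top_of_le_ne_top (EReal.coe_ne_top _) hwle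
        have hws : w' α β = w α β := by
          rw [hw' α β, if_neg]
          rintro ⟨_, _, h3'⟩
          exact hwtop h3'
        have hmem2 : w' α β ∈ {c : EReal | ∃ (q : ℕ) (β' : ℕ → Fin n),
            1 ≤ q ∧ β' 0 = α ∧ β' q = β ∧ c = wsum w' β' q} := by
          refine ⟨1, (fun m => if m = 0 then α else β), le_refl 1, by simp, by simp, ?_⟩
          rw [wsum, Finset.sum_range_one]
          norm_num
        have hle := hminβ _ hmem2
        rw [hws] at hle
        have hle2 : ((yd β : ℝ) : EReal) ≤ ((ρ k α - ρ k β : ℝ) : EReal) :=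
          le_trans hle hwle
        have hr : yd β ≤ ρ k α - ρ k β := by exact_mod_cast hle2
        rw [hysv β hbs, hss0]
        linarith
      · obtain ⟨hmemα, _⟩ := hyd α has
        obtain ⟨q, π, hq1, hπ0, hπq, hval⟩ := hmemα
        have hmem2 : (wsum w' π q + w' (π q) β) ∈ {c : EReal | ∃ (q' : ℕ) (β' : ℕ → Fin n),
            1 ≤ q' ∧ β' 0 = s ∧ β' q' = β ∧ c = wsum w' β' q'} := by
          refine ⟨q+1, (fun m => if m ≤ q then π m else β), by omega, ?_, ?_, ?_⟩
          · beta_reduce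
            rw [if_pos (Nat.zero_le q)]
            exact hπ0
          · beta_reduce
            rw [if_neg (by omega : ¬ (q+1 ≤ q))]
          · exact (path_extend w' q π β).symm
        have hle := hminβ _ hmem2
        rw [← hval, hπq] at hle
        have hws : w' α β = w α β := by
          rw [hw' α β, if_neg]
          rintro ⟨hss, _, _⟩
          exact has hss
        have hle2 : ((yd β : ℝ) : EReal)
            ≤ ((yd α : ℝ) : EReal) + ((ρ k α - ρ k β : ℝ) : EReal) :=
          le_trans hle (add_le_add (le_refl _) (by rw [hws]; exact hwle))
        rw [← EReal.coe_add] at hle2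
        have hr : yd β ≤ yd α + (ρ k α - ρ k β) := by exact_mod_cast hle2
        rw [hysv α has, hysv β hbs]
        linarith
  refine ⟨fun r γ hr hγ => hacyc r γ hr hγ, ystar, hss0, ?_, ?_⟩
  · intro t ht
    rw [hysv t ht]
    exact hyd t ht
  · intro k v hvF
    have husk := hu k
    rw [hF k] at husk hvF
    obtain ⟨hu01, husum, huJ⟩ := husk
    obtain ⟨hv01, hvsum, hvJ⟩ := hvF
    apply opt_of_pairwise (fun i => ρ k i + ystar i) (ustar k) v hu01 hv01
      (by rw [husum, hvsum])
    intro α β hα hβ hvβ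
    have hβJ : β ∉ J k := by
      intro hin
      rw [hvJ β hin] at hvβ
      norm_num at hvβ
    exact hpair k α β hα hβ hβJ
end

section
/- Assume J_k = ∅ for every k, so that F_k = {u ∈ {0,1}^n : ∑_{i=1}^n u(i) = R_k}, with integers 0 ≤ R_k ≤ n (k = 1,…,K). Define N^max ∈ ℕ^n by N^max_m = #{k ∈ {1,…,K} : R_k ≥ m} for m ∈ {1,…,n}. Then the Minkowski sum F_1 + ⋯ + F_K equals the set of vectors N ∈ ℕ^n majorized by N^max, i.e. F_1 + ⋯ + F_K = {N ∈ ℕ^n : ∑_{i=1}^n N_i = ∑_{k=1}^K R_k and, for every m ∈ {1,…,n}, S(N, m) ≤ ∑_{i=1}^m N^max_i}, where S(N, m) denotes the maximum over all m-element subsets A of {1,…,n} of ∑_{i∈A} N_i (the sum of the m largest coordinates of N). -/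
namespace GR
open Finset

variable {n K : ℕ}

def topSum (N : Fin n → ℕ) (m : ℕ) : ℕ :=
  (Finset.powersetCard m (Finset.univ : Finset (Fin n))).sup (fun A => ∑ i ∈ A, N i)

def pre (N : Fin n → ℕ) (m : ℕ) : ℕ :=
  ∑ i ∈ Finset.univ.filter (fun i : Fin n => (i : ℕ) < m), N i

lemma filter_lt_eq_map (m : ℕ) (hm : m ≤ n) :
    (Finset.univ.filter (fun i : Fin n => (i : ℕ) < m))
      = (Finset.univ : Finset (Fin m)).map (Fin.castLEEmb hm) := by
  ext x
  constructor
  · intro hx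
    have h := (mem_filter.mp hx).2
    exact mem_map.mpr ⟨⟨(x : ℕ), h⟩, mem_univ _, Fin.ext rfl⟩
  · intro hx
    obtain ⟨i, -, rfl⟩ := mem_map.mp hx
    exact mem_filter.mpr ⟨mem_univ _, by simpa using i.2⟩

lemma card_filter_lt (m : ℕ) (hm : m ≤ n) :
    (Finset.univ.filter (fun i : Fin n => (i : ℕ) < m)).card = m := by
  rw [filter_lt_eq_map m hm, card_map, card_univ, Fintype.card_fin]

lemma sum_le_topSum {N : Fin n → ℕ} {m : ℕ} {A : Finset (Fin n)} (hA : A.card = m) :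
    ∑ i ∈ A, N i ≤ topSum N m := by
  unfold topSum
  exact Finset.le_sup (f := fun A => ∑ i ∈ A, N i)
    (Finset.mem_powersetCard.mpr ⟨Finset.subset_univ A, hA⟩)

lemma topSum_le {N : Fin n → ℕ} {m c : ℕ}
    (h : ∀ A : Finset (Fin n), A.card = m → ∑ i ∈ A, N i ≤ c) :
    topSum N m ≤ c :=
  Finset.sup_le (fun A hA => h A (Finset.mem_powersetCard.mp hA).2)

lemma pre_le_topSum (N : Fin n → ℕ) {m : ℕ} (hm : m ≤ n) :
    pre N m ≤ topSum N m :=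
  sum_le_topSum (card_filter_lt m hm)

lemma topSum_comp_perm_le (N : Fin n → ℕ) (σ : Equiv.Perm (Fin n)) (m : ℕ) :
    topSum (N ∘ σ) m ≤ topSum N m := by
  refine topSum_le (fun A hA => ?_)
  have h1 : ∑ i ∈ A, (N ∘ σ) i = ∑ j ∈ A.image σ, N j := by
    rw [Finset.sum_image (fun a _ b _ h => σ.injective h)]; rfl
  rw [h1]
  exact sum_le_topSum (by rw [Finset.card_image_of_injective _ σ.injective, hA])

lemma topSum_comp_perm (N : Fin n → ℕ) (σ : Equiv.Perm (Fin n)) (m : ℕ) :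
    topSum (N ∘ σ) m = topSum N m := by
  refine le_antisymm (topSum_comp_perm_le N σ m) ?_
  have := topSum_comp_perm_le (N ∘ σ) σ.symm m
  have h2 : (N ∘ σ) ∘ σ.symm = N := by funext t; simp
  rwa [h2] at this

lemma exists_antitone_perm (x : Fin n → ℕ) :
    ∃ σ : Equiv.Perm (Fin n), Antitone (x ∘ σ) := by
  let f : Fin n → ℕᵒᵈ := fun i => OrderDual.toDual (x i)
  refine ⟨Tuple.sort f, fun i j hij => ?_⟩
  exact Tuple.monotone_sort f hij

lemma strictMono_le {m : ℕ} (f : Fin m → Fin n) (hf : StrictMono f) (i : Fin m) :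
    (i : ℕ) ≤ (f i : ℕ) := by
  suffices h : ∀ v : ℕ, ∀ i : Fin m, (i : ℕ) = v → (i : ℕ) ≤ (f i : ℕ) from h _ i rfl
  intro v
  induction v with
  | zero => intro i hi; omega
  | succ v ih =>
    intro i hi
    have hv : v < m := by omega
    have h1 := ih ⟨v, hv⟩ rfl
    have h2 : (⟨v, hv⟩ : Fin m) < i := by rw [Fin.lt_def]; simp; omega
    have h3 := hf h2
    rw [Fin.lt_def] at h3
    simp at h1
    omega

lemma sum_le_pre_of_antitone {s : Fin n → ℕ} (hs : Antitone s) (B : Finset (Fin n)) :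
    ∑ i ∈ B, s i ≤ pre s B.card := by
  set m := B.card with hm
  have hmn : m ≤ n := by
    rw [hm]; simpa using Finset.card_le_card (Finset.subset_univ B)
  set e := B.orderIsoOfFin hm.symm with he
  have key : ∀ i : Fin m, (i : ℕ) ≤ ((e i : Fin n) : ℕ) := by
    intro i
    refine strictMono_le (fun t => (e t : Fin n)) ?_ i
    intro a b hab
    exact_mod_cast e.strictMono hab
  have h1 : ∑ i ∈ B, s i = ∑ i : Fin m, s (e i) := by
    rw [← Finset.sum_coe_sort B s]
    exact (Equiv.sum_comp e.toEquiv (fun b : B => s b)).symm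
  have h2 : pre s m = ∑ i : Fin m, s (Fin.castLE hmn i) := by
    rw [pre, filter_lt_eq_map m hmn, Finset.sum_map]; rfl
  rw [h1, h2]
  refine Finset.sum_le_sum (fun i _ => hs ?_)
  rw [Fin.le_def]
  simpa using key i

lemma topSum_eq_pre {s : Fin n → ℕ} (hs : Antitone s) {m : ℕ} (hm : m ≤ n) :
    topSum s m = pre s m := by
  refine le_antisymm (topSum_le (fun A hA => ?_)) (pre_le_topSum s hm)
  have := sum_le_pre_of_antitone hs A
  rwa [hA] at this

lemma pre_succ (s : Fin n → ℕ) {t : ℕ} (ht : t < n) :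
    pre s (t + 1) = pre s t + s ⟨t, ht⟩ := by
  have h : Finset.univ.filter (fun i : Fin n => (i : ℕ) < t + 1)
      = insert (⟨t, ht⟩ : Fin n) (Finset.univ.filter (fun i : Fin n => (i : ℕ) < t)) := by
    ext x
    simp only [mem_filter, mem_univ, true_and, mem_insert, Fin.ext_iff]
    omega
  rw [pre, h, Finset.sum_insert (by simp), pre]
  omega

def Mem (R : Fin K → ℕ) (N : Fin n → ℕ) : Prop :=
  ∃ u : Fin K → Fin n → ℕ,
    (∀ k, (∀ i, u k i ≤ 1) ∧ (∑ i, u k i) = R k) ∧ (∑ k, u k) = N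

def transfer (i j : Fin n) (N : Fin n → ℕ) : Fin n → ℕ :=
  Function.update (Function.update N i (N i - 1)) j (N j + 1)

lemma sum_transfer {i j : Fin n} (hij : i ≠ j) (N : Fin n → ℕ) (hi : 1 ≤ N i) :
    ∑ t, transfer i j N t = ∑ t, N t := by
  rw [transfer, Finset.sum_update_of_mem (mem_univ j),
      Finset.sum_update_of_mem (by simp [hij] : i ∈ univ \ {j})]
  have h1 : ∑ t, N t = N j + (N i + ∑ x ∈ (univ \ {j}) \ {i}, N x) := by
    rw [sdiff_singleton_eq_erase, sdiff_singleton_eq_erase,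
        Finset.add_sum_erase _ N (Finset.mem_erase.mpr ⟨hij, mem_univ i⟩),
        Finset.add_sum_erase _ N (mem_univ j)]
  rw [h1]
  set S := ∑ x ∈ (univ \ {j}) \ {i}, N x
  omega

lemma mem_perm {R : Fin K → ℕ} {N : Fin n → ℕ} (h : Mem R N) (σ : Equiv.Perm (Fin n)) :
    Mem R (N ∘ σ) := by
  obtain ⟨u, hu, hsum⟩ := h
  refine ⟨fun k => u k ∘ σ, fun k => ⟨fun i => (hu k).1 (σ i), ?_⟩, ?_⟩
  · rw [← (hu k).2]; exact Equiv.sum_comp σ (u k)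
  · funext t
    have := congrFun hsum (σ t)
    simpa [Finset.sum_apply] using this

lemma mem_transfer {R : Fin K → ℕ} {N : Fin n → ℕ} (h : Mem R N) {i j : Fin n}
    (hij : N j < N i) : Mem R (transfer i j N) := by
  obtain ⟨u, hu, hsum⟩ := h
  have hne : i ≠ j := by rintro rfl; omega
  have hNi : ∀ t, N t = ∑ k, u k t := by
    intro t; rw [← hsum]; simp [Finset.sum_apply]
  have hex : ∃ k, u k i = 1 ∧ u k j = 0 := by
    by_contra hcon
    push_neg at hcon
    have hle : ∀ k, u k i ≤ u k j := by
      intro k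
      have h1 := (hu k).1 i
      have h2 := (hu k).1 j
      rcases Nat.le_one_iff_eq_zero_or_eq_one.mp h1 with hc | hc
      · omega
      · have := hcon k hc; omega
    have : N i ≤ N j := by
      rw [hNi i, hNi j]; exact Finset.sum_le_sum (fun k _ => hle k)
    omega
  obtain ⟨k, hki, hkj⟩ := hex
  refine ⟨Function.update u k (transfer i j (u k)), fun k' => ?_, ?_⟩
  · by_cases hk' : k' = k
    · subst hk'
      rw [Function.update_self]
      constructor
      · intro t
        rcases eq_or_ne t j with rfl | htj
        · simp [transfer, hkj]
        rcases eq_or_ne t i with rfl | hti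
        · simp [transfer, Function.update_of_ne htj, hki]
        · simp only [transfer, Function.update_of_ne htj, Function.update_of_ne hti]
          exact (hu k').1 t
      · rw [sum_transfer hne (u k') (by omega)]; exact (hu k').2
    · rw [Function.update_of_ne hk']; exact hu k'
  · funext t
    have hNt := hNi t
    have hsum2 : (∑ k', Function.update u k (transfer i j (u k)) k') t
        = transfer i j (u k) t + ∑ k' ∈ univ \ {k}, u k' t := by
      rw [Finset.sum_apply]
      have hc : ∀ k', (Function.update u k (transfer i j (u k)) k') t
          = Function.update (fun k'' => u k'' t) k (transfer i j (u k) t) k' := by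
        intro k'
        by_cases hk' : k' = k
        · subst hk'; simp
        · simp [hk']
      rw [Finset.sum_congr rfl (fun k' _ => hc k')]
      rw [Finset.sum_update_of_mem (mem_univ k)]
    have hNt2 : N t = u k t + ∑ k' ∈ univ \ {k}, u k' t := by
      rw [hNt, sdiff_singleton_eq_erase, ← Finset.add_sum_erase _ _ (mem_univ k)]
    rcases eq_or_ne t j with rfl | htj
    · rw [hsum2]
      simp only [transfer, Function.update_self]
      set S := ∑ k' ∈ univ \ {k}, u k' t
      omega
    rcases eq_or_ne t i with rfl | hti
    · rw [hsum2]
      simp only [transfer, Function.update_of_ne htj, Function.update_self]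
      set S := ∑ k' ∈ univ \ {k}, u k' t
      omega
    · rw [hsum2]
      simp only [transfer, Function.update_of_ne htj, Function.update_of_ne hti]
      set S := ∑ k' ∈ univ \ {k}, u k' t
      omega


lemma pre_conj (R : Fin K → ℕ) (hR : ∀ k, R k ≤ n) (m : ℕ) (hm : m ≤ n) :
    pre (fun i : Fin n => (Finset.univ.filter (fun k : Fin K => (i : ℕ) + 1 ≤ R k)).card) m
      = ∑ k, min m (R k) := by
  unfold pre
  have h1 : ∀ i : Fin n, (Finset.univ.filter (fun k : Fin K => (i : ℕ) + 1 ≤ R k)).card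
      = ∑ k : Fin K, if (i : ℕ) + 1 ≤ R k then 1 else 0 := by
    intro i; rw [Finset.card_filter]
  rw [Finset.sum_congr rfl (fun i _ => h1 i), Finset.sum_comm]
  refine Finset.sum_congr rfl (fun k _ => ?_)
  rw [← Finset.card_filter]
  have h2 : (Finset.univ.filter (fun i : Fin n => (i : ℕ) < m)).filter
        (fun i : Fin n => (i : ℕ) + 1 ≤ R k)
      = Finset.univ.filter (fun i : Fin n => (i : ℕ) < min m (R k)) := by
    rw [Finset.filter_filter]
    refine Finset.filter_congr (fun i _ => ?_)
    simp only [lt_min_iff]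
    omega
  rw [h2, card_filter_lt _ (by omega : min m (R k) ≤ n)]

lemma mem_base (R : Fin K → ℕ) (hR : ∀ k, R k ≤ n) :
    Mem R (fun i : Fin n => (Finset.univ.filter (fun k : Fin K => (i : ℕ) + 1 ≤ R k)).card) := by
  refine ⟨fun k i => if (i : ℕ) + 1 ≤ R k then 1 else 0,
    fun k => ⟨fun i => by dsimp only; split <;> omega, ?_⟩, ?_⟩
  · rw [← Finset.card_filter]
    have h2 : Finset.univ.filter (fun i : Fin n => (i : ℕ) + 1 ≤ R k)
        = Finset.univ.filter (fun i : Fin n => (i : ℕ) < R k) := by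
      refine Finset.filter_congr (fun i _ => ?_); omega
    rw [h2, card_filter_lt _ (hR k)]
  · funext i
    rw [Finset.sum_apply, Finset.card_filter]

lemma pre_update_of_not_lt {f : Fin n → ℕ} {c : Fin n} {v m : ℕ} (h : ¬ (c : ℕ) < m) :
    pre (Function.update f c v) m = pre f m := by
  refine Finset.sum_congr rfl (fun t ht => ?_)
  refine Function.update_of_ne ?_ _ _
  rintro rfl
  exact h (mem_filter.mp ht).2

lemma pre_update_of_lt {f : Fin n → ℕ} {c : Fin n} {v m : ℕ} (h : (c : ℕ) < m) :
    pre (Function.update f c v) m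
      = v + ∑ t ∈ (Finset.univ.filter (fun i : Fin n => (i : ℕ) < m)) \ {c}, f t := by
  have hc : c ∈ Finset.univ.filter (fun i : Fin n => (i : ℕ) < m) := by simp [h]
  rw [pre, Finset.sum_update_of_mem hc]

lemma pre_eq_add {f : Fin n → ℕ} {c : Fin n} {m : ℕ} (h : (c : ℕ) < m) :
    pre f m = f c + ∑ t ∈ (Finset.univ.filter (fun i : Fin n => (i : ℕ) < m)) \ {c}, f t := by
  have hc : c ∈ Finset.univ.filter (fun i : Fin n => (i : ℕ) < m) := by simp [h]
  rw [pre, sdiff_singleton_eq_erase, ← Finset.add_sum_erase _ _ hc]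

lemma chain (R : Fin K → ℕ) :
    ∀ W : ℕ, ∀ y : Fin n → ℕ, (∑ i, (y i) ^ 2) ≤ W → Mem R y →
      ∀ x : Fin n → ℕ, (∑ i, x i) = (∑ i, y i) →
      (∀ m, m ≤ n → topSum x m ≤ topSum y m) → Mem R x := by
  intro W
  induction W using Nat.strong_induction_on with
  | _ W ih =>
  intro y hW hy x hsum hdom
  obtain ⟨σx, hsx⟩ := exists_antitone_perm x
  obtain ⟨σy, hsy⟩ := exists_antitone_perm y
  set sx := x ∘ σx with hsxdef
  set sy := y ∘ σy with hsydef
  have hpre : ∀ m, m ≤ n → pre sx m ≤ pre sy m := by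
    intro m hm
    rw [← topSum_eq_pre hsx hm, ← topSum_eq_pre hsy hm, hsxdef, hsydef,
        topSum_comp_perm, topSum_comp_perm]
    exact hdom m hm
  have hsums : ∑ t, sx t = ∑ t, sy t := by
    have h1 : ∑ t, sx t = ∑ t, x t := Equiv.sum_comp σx x
    have h2 : ∑ t, sy t = ∑ t, y t := Equiv.sum_comp σy y
    omega
  by_cases hxy : sx = sy
  · have hxperm : x = y ∘ (σx.symm.trans σy) := by
      funext t
      have h := congrFun hxy (σx.symm t)
      simp only [hsxdef, hsydef, Function.comp_apply, Equiv.apply_symm_apply] at h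
      simpa using h
    rw [hxperm]
    exact mem_perm hy _
  · have hexj : ∃ t, sy t < sx t := by
      by_contra hc
      push_neg at hc
      apply hxy
      funext t
      have heq := (Finset.sum_eq_sum_iff_of_le (fun t _ => hc t)).mp hsums
      exact heq t (mem_univ t)
    have hSj : (Finset.univ.filter (fun t : Fin n => sy t < sx t)).Nonempty := by
      obtain ⟨t, ht⟩ := hexj
      exact ⟨t, mem_filter.mpr ⟨mem_univ t, ht⟩⟩
    obtain ⟨j, hjmem, hjle⟩ := Finset.exists_min_image
      (Finset.univ.filter (fun t : Fin n => sy t < sx t)) (fun t => (t : ℕ)) hSj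
    have hj : sy j < sx j := (mem_filter.mp hjmem).2
    have hjmin : ∀ t : Fin n, (t : ℕ) < (j : ℕ) → sx t ≤ sy t := by
      intro t ht
      by_contra hc; push_neg at hc
      have h2 := hjle t (mem_filter.mpr ⟨mem_univ t, hc⟩)
      omega
    have hjn : (j : ℕ) < n := j.2
    have hpj : pre sx ((j : ℕ) + 1) ≤ pre sy ((j : ℕ) + 1) := hpre _ (by omega)
    rw [pre_succ sx hjn, pre_succ sy hjn] at hpj
    have hjj : (⟨(j : ℕ), hjn⟩ : Fin n) = j := Fin.ext rfl
    rw [hjj] at hpj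
    have hprej : pre sx (j : ℕ) + 1 ≤ pre sy (j : ℕ) := by omega
    have hexi : ∃ t : Fin n, (t : ℕ) < (j : ℕ) ∧ sx t < sy t := by
      by_contra hc; push_neg at hc
      have hle : pre sy (j : ℕ) ≤ pre sx (j : ℕ) := by
        refine Finset.sum_le_sum (fun t ht => ?_)
        exact hc t (mem_filter.mp ht).2
      omega
    have hSi : (Finset.univ.filter
        (fun t : Fin n => (t : ℕ) < (j : ℕ) ∧ sx t < sy t)).Nonempty := by
      obtain ⟨t, h1, h2⟩ := hexi
      exact ⟨t, mem_filter.mpr ⟨mem_univ t, h1, h2⟩⟩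
    obtain ⟨i, himem, hile⟩ := Finset.exists_max_image
      (Finset.univ.filter (fun t : Fin n => (t : ℕ) < (j : ℕ) ∧ sx t < sy t))
      (fun t => (t : ℕ)) hSi
    have hi1 : (i : ℕ) < (j : ℕ) ∧ sx i < sy i := (mem_filter.mp himem).2
    have himax : ∀ t : Fin n, (i : ℕ) < (t : ℕ) → (t : ℕ) < (j : ℕ) → sy t ≤ sx t := by
      intro t ht1 ht2
      by_contra hc; push_neg at hc
      have h2 := hile t (mem_filter.mpr ⟨mem_univ t, ht2, hc⟩)
      omega
    have hmid : ∀ t : Fin n, (i : ℕ) < (t : ℕ) → (t : ℕ) < (j : ℕ) → sx t = sy t := by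
      intro t h1 h2
      have ha := himax t h1 h2
      have hb := hjmin t h2
      omega
    have hij : (i : ℕ) < (j : ℕ) := hi1.1
    have hab : sy j + 2 ≤ sy i := by
      have h1 : sx j ≤ sx i := hsx (by rw [Fin.le_def]; omega)
      omega
    have hstrict : ∀ m : ℕ, (i : ℕ) < m → m ≤ (j : ℕ) → pre sx m + 1 ≤ pre sy m := by
      intro m
      induction m with
      | zero => omega
      | succ m ihm =>
        intro h1 h2
        have hmn : m < n := by omega
        rw [pre_succ sx hmn, pre_succ sy hmn]
        by_cases hmi : m = (i : ℕ)
        · have hpi : pre sx m ≤ pre sy m := hpre m (by omega)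
          have hfm : (⟨m, hmn⟩ : Fin n) = i := Fin.ext hmi
          rw [hfm]
          have := hi1.2
          omega
        · have hmr := ihm (by omega) (by omega)
          have heq : sx ⟨m, hmn⟩ = sy ⟨m, hmn⟩ := hmid ⟨m, hmn⟩ (by simp; omega) (by simp; omega)
          omega
    -- new vector
    have hijne : i ≠ j := by intro h; rw [h] at hij; omega
    have hpq : σy i ≠ σy j := fun h => hijne (σy.injective h)
    have hyq : y (σy j) < y (σy i) := by
      have e1 : y (σy i) = sy i := rfl
      have e2 : y (σy j) = sy j := rfl
      omega
    have hy'mem : Mem R (transfer (σy i) (σy j) y) := mem_transfer hy hyq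
    have hyp1 : 1 ≤ y (σy i) := by
      have e1 : y (σy i) = sy i := rfl
      omega
    have hsum' : ∑ t, transfer (σy i) (σy j) y t = ∑ t, y t := sum_transfer hpq y hyp1
    set y' := transfer (σy i) (σy j) y with hy'def
    -- y' ∘ σy = transfer i j sy
    have hcomp : ∀ t, y' (σy t) = transfer i j sy t := by
      intro t
      by_cases htj : t = j
      · subst htj
        simp only [hy'def, transfer, Function.update_self]
        rfl
      · have hσj : σy t ≠ σy j := fun h => htj (σy.injective h)
        by_cases hti : t = i
        · subst hti
          simp only [hy'def, transfer, Function.update_of_ne hσj,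
            Function.update_of_ne htj, Function.update_self]
          rfl
        · have hσi : σy t ≠ σy i := fun h => hti (σy.injective h)
          simp only [hy'def, transfer, Function.update_of_ne hσj,
            Function.update_of_ne htj, Function.update_of_ne hσi,
            Function.update_of_ne hti]
          rfl
    -- measure decrease
    have hmeas : ∑ t, (y' t) ^ 2 + 2 ≤ ∑ t, (y t) ^ 2 := by
      have hptw : ∀ t, (y' t) ^ 2 = Function.update
          (Function.update (fun t => (y t) ^ 2) (σy i) ((y (σy i) - 1) ^ 2))
          (σy j) ((y (σy j) + 1) ^ 2) t := by
        intro t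
        by_cases htj : t = σy j
        · subst htj; simp [hy'def, transfer]
        · by_cases hti : t = σy i
          · subst hti
            simp [hy'def, transfer, Function.update_of_ne htj]
          · simp [hy'def, transfer, Function.update_of_ne htj, Function.update_of_ne hti]
      rw [Finset.sum_congr rfl (fun t _ => hptw t),
        Finset.sum_update_of_mem (mem_univ (σy j)),
        Finset.sum_update_of_mem (by simp [hpq] : σy i ∈ univ \ {σy j})]
      have hsplit : ∑ t, (y t) ^ 2 = (y (σy j)) ^ 2
          + ((y (σy i)) ^ 2 + ∑ t ∈ (univ \ {σy j}) \ {σy i}, (y t) ^ 2) := by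
        rw [← Finset.add_sum_erase univ (fun t => (y t) ^ 2) (mem_univ (σy j)),
          ← Finset.add_sum_erase _ (fun t => (y t) ^ 2)
            (Finset.mem_erase.mpr ⟨hpq, mem_univ (σy i)⟩),
          sdiff_singleton_eq_erase, sdiff_singleton_eq_erase]
      rw [hsplit]
      have e1 : y (σy i) = sy i := rfl
      have e2 : y (σy j) = sy j := rfl
      rw [e1, e2]
      have hkey : (sy j + 1) ^ 2 + (sy i - 1) ^ 2 + 2 ≤ (sy j) ^ 2 + (sy i) ^ 2 := by
        obtain ⟨d, hd⟩ : ∃ d, sy i = sy j + 2 + d := ⟨sy i - (sy j + 2), by omega⟩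
        rw [hd]
        have h3 : sy j + 2 + d - 1 = sy j + 1 + d := by omega
        rw [h3]
        ring_nf
        nlinarith [sq_nonneg (sy j), sq_nonneg d]
      set S2 := ∑ t ∈ (univ \ {σy j}) \ {σy i}, (y t) ^ 2
      omega
    -- new prefix dominance on sorted side
    have hpre' : ∀ m, m ≤ n → pre sx m ≤ pre (transfer i j sy) m := by
      intro m hm
      rcases le_or_gt m (i : ℕ) with hmi | hmi
      · have : pre (transfer i j sy) m = pre sy m := by
          rw [transfer, pre_update_of_not_lt (by omega), pre_update_of_not_lt (by omega)]
        rw [this]; exact hpre m hm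
      rcases le_or_gt m (j : ℕ) with hmj | hmj
      · have h1 : pre (transfer i j sy) m
            = (sy i - 1) + ∑ t ∈ (Finset.univ.filter (fun t : Fin n => (t : ℕ) < m)) \ {i},
                sy t := by
          rw [transfer, pre_update_of_not_lt (by omega)]
          exact pre_update_of_lt (by omega)
        have h2 : pre sy m = sy i + ∑ t ∈ (Finset.univ.filter
            (fun t : Fin n => (t : ℕ) < m)) \ {i}, sy t := pre_eq_add (by omega)
        have h3 := hstrict m hmi hmj
        set S3 := ∑ t ∈ (Finset.univ.filter (fun t : Fin n => (t : ℕ) < m)) \ {i}, sy t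
        omega
      · -- j < m : sum unchanged
        have hupd : ∀ t : Fin n, transfer i j sy t = Function.update
            (Function.update sy i (sy i - 1)) j (sy j + 1) t := fun t => rfl
        have h1 : pre (transfer i j sy) m
            = (sy j + 1) + ∑ t ∈ (Finset.univ.filter (fun t : Fin n => (t : ℕ) < m)) \ {j},
                Function.update sy i (sy i - 1) t := by
          rw [transfer]
          exact pre_update_of_lt (by omega)
        have hi_mem : i ∈ (Finset.univ.filter (fun t : Fin n => (t : ℕ) < m)) \ {j} := by
          simp [hijne]
          omega
        have h2 : ∑ t ∈ (Finset.univ.filter (fun t : Fin n => (t : ℕ) < m)) \ {j},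
              Function.update sy i (sy i - 1) t
            = (sy i - 1) + ∑ t ∈ ((Finset.univ.filter (fun t : Fin n => (t : ℕ) < m)) \ {j})
                \ {i}, sy t := by
          rw [Finset.sum_update_of_mem hi_mem]
        have h3 : pre sy m = sy j + (sy i + ∑ t ∈ ((Finset.univ.filter
            (fun t : Fin n => (t : ℕ) < m)) \ {j}) \ {i}, sy t) := by
          rw [pre, sdiff_singleton_eq_erase, sdiff_singleton_eq_erase,
            Finset.add_sum_erase _ _ (Finset.mem_erase.mpr ⟨hijne, by simp; omega⟩),
            Finset.add_sum_erase _ _ (by simp; omega : j ∈ Finset.univ.filter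
              (fun t : Fin n => (t : ℕ) < m))]
        have h4 := hpre m hm
        set S4 := ∑ t ∈ ((Finset.univ.filter (fun t : Fin n => (t : ℕ) < m)) \ {j}) \ {i}, sy t
        omega
    have hdom' : ∀ m, m ≤ n → topSum x m ≤ topSum y' m := by
      intro m hm
      calc topSum x m = topSum sx m := by rw [hsxdef, topSum_comp_perm]
        _ = pre sx m := topSum_eq_pre hsx hm
        _ ≤ pre (transfer i j sy) m := hpre' m hm
        _ = pre (y' ∘ σy) m := by
            refine Finset.sum_congr rfl (fun t _ => ?_)
            exact (hcomp t).symm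
        _ ≤ topSum (y' ∘ σy) m := pre_le_topSum _ hm
        _ = topSum y' m := topSum_comp_perm y' σy m
    exact ih (∑ t, (y' t) ^ 2) (by omega) y' le_rfl hy'mem x (by rw [hsum, ← hsum']) hdom'


lemma topSum_zero (N : Fin n → ℕ) : topSum N 0 = 0 := by
  simp [topSum]

lemma pre_all (N : Fin n → ℕ) : pre N n = ∑ i, N i := by
  unfold pre
  congr 1
  ext i
  simp [i.2]

end GR

/-- Gale–Ryser corollary: with `Jₖ = ∅`, the Minkowski sum `F₁ + ⋯ + F_K`
equals the set of `N ∈ ℕⁿ` majorized by `N^max`, where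
`N^max_m = #{k : Rₖ ≥ m}` and `S(N,m)` is the sum of the `m` largest
coordinates of `N` (the maximum of `∑_{i∈A} Nᵢ` over `m`-element subsets). -/
theorem stmt_17 (n K : ℕ) (R : Fin K → ℕ) (hR : ∀ k, R k ≤ n)
    (F : Fin K → Set (Fin n → ℕ))
    (hF : ∀ k, F k = {u : Fin n → ℕ | (∀ i, u i ≤ 1) ∧ (∑ i, u i) = R k})
    (Nmax : Fin n → ℕ)
    (hNmax : ∀ m : Fin n,
      Nmax m = (Finset.univ.filter (fun k : Fin K => (m : ℕ) + 1 ≤ R k)).card) :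
    {N : Fin n → ℕ | ∃ u : Fin K → Fin n → ℕ, (∀ k, u k ∈ F k) ∧ (∑ k, u k) = N}
      = {N : Fin n → ℕ | (∑ i, N i) = (∑ k, R k)
          ∧ ∀ m : ℕ, 1 ≤ m → m ≤ n →
            (Finset.powersetCard m (Finset.univ : Finset (Fin n))).sup
                (fun A => ∑ i ∈ A, N i)
              ≤ ∑ i ∈ Finset.univ.filter (fun i : Fin n => (i : ℕ) < m), Nmax i} := by
  have hNfun : Nmax = fun i : Fin n =>
      (Finset.univ.filter (fun k : Fin K => (i : ℕ) + 1 ≤ R k)).card := funext hNmax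
  have hMemIff : ∀ N : Fin n → ℕ,
      (∃ u : Fin K → Fin n → ℕ, (∀ k, u k ∈ F k) ∧ (∑ k, u k) = N) ↔ GR.Mem R N := by
    intro N
    constructor
    · rintro ⟨u, hu, hs⟩
      refine ⟨u, fun k => ?_, hs⟩
      have := hu k
      rw [hF k] at this
      exact this
    · rintro ⟨u, hu, hs⟩
      refine ⟨u, fun k => ?_, hs⟩
      rw [hF k]
      exact hu k
  have hpreNmax : ∀ m : ℕ, m ≤ n → GR.pre Nmax m = ∑ k, min m (R k) := by
    intro m hm
    rw [hNfun]
    exact GR.pre_conj R hR m hm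
  ext N
  simp only [Set.mem_setOf_eq]
  rw [hMemIff N]
  constructor
  · rintro ⟨u, hu, hs⟩
    have hNi : ∀ i, N i = ∑ k, u k i := by
      intro i; rw [← hs]; simp [Finset.sum_apply]
    constructor
    · calc ∑ i, N i = ∑ i, ∑ k, u k i := Finset.sum_congr rfl (fun i _ => hNi i)
        _ = ∑ k, ∑ i, u k i := Finset.sum_comm
        _ = ∑ k, R k := Finset.sum_congr rfl (fun k _ => (hu k).2)
    · intro m hm1 hm
      show GR.topSum N m ≤ GR.pre Nmax m
      rw [hpreNmax m hm]
      refine GR.topSum_le (fun A hA => ?_)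
      calc ∑ i ∈ A, N i = ∑ i ∈ A, ∑ k, u k i := Finset.sum_congr rfl (fun i _ => hNi i)
        _ = ∑ k, ∑ i ∈ A, u k i := Finset.sum_comm
        _ ≤ ∑ k, min m (R k) := by
            refine Finset.sum_le_sum (fun k _ => le_min ?_ ?_)
            · calc ∑ i ∈ A, u k i ≤ ∑ i ∈ A, 1 :=
                  Finset.sum_le_sum (fun i _ => (hu k).1 i)
                _ = m := by simp [hA]
            · calc ∑ i ∈ A, u k i ≤ ∑ i, u k i :=
                  Finset.sum_le_sum_of_subset (Finset.subset_univ A)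
                _ = R k := (hu k).2
  · rintro ⟨h1, h2⟩
    have hbase : GR.Mem R Nmax := by
      rw [hNfun]; exact GR.mem_base R hR
    have hsumNmax : ∑ i, Nmax i = ∑ k, R k := by
      rw [← GR.pre_all Nmax, hpreNmax n le_rfl]
      exact Finset.sum_congr rfl (fun k _ => min_eq_right (hR k))
    refine GR.chain R (∑ i, (Nmax i) ^ 2) Nmax le_rfl hbase N (by omega) ?_
    intro m hm
    rcases Nat.eq_zero_or_pos m with rfl | hm1
    · rw [GR.topSum_zero]
      exact Nat.zero_le _
    · calc GR.topSum N m ≤ GR.pre Nmax m := h2 m hm1 hm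
        _ ≤ GR.topSum Nmax m := GR.pre_le_topSum Nmax hm
end
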